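/- arXiv:1601.01891 — 9 statements merged into one kernel-verified Lean document; each statement's English description precedes it below -/
import Mathlib

section
/- For any finite list L of nodes of a k-ary tree U that is a D-visit from a node λ (for a priority list D of colors), the list L has no repetitions and the set of its elements, ordered by the prefix relation, forms a subtree of U rooted at λ. -/
/-- A `k`-ary tree: a prefix-closed set of finite lists over colors `< k`,
containing the empty list. -/
def IsKTree (k : ℕ) (U : Set (List ℕ)) : Prop :=
  [] ∈ U ∧ (∀ l ∈ U, ∀ p : List ℕ, p <+: l → p ∈ U) ∧ ∀ l ∈ U, ∀ c ∈ l, c < k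

/-- `L` is `D`-complete: every child (in `U`) with color in `D` of a node of `L` is in `L`. -/
def DComplete (U : Set (List ℕ)) (D : List ℕ) (L : List (List ℕ)) : Prop :=
  ∀ μ ∈ L, ∀ d ∈ D, μ ++ [d] ∈ U → μ ++ [d] ∈ L

/-- `ν` is the `n`-th `d`-expansion of `M`: `ν = μ ++ [d] ∈ U` for some `μ ∈ M`, and exactly
`n` nodes of `M` lexicographically below `μ` have a `d`-child in `U`. -/
def DExpansion (U : Set (List ℕ)) (M : List (List ℕ)) (n d : ℕ) (ν : List ℕ) : Prop :=
  ν ∈ U ∧ ∃ μ ∈ M, ν = μ ++ [d] ∧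
    {η | η ∈ M ∧ η ++ [d] ∈ U ∧ List.Lex (· < ·) η μ}.ncard = n

/-- `DVisit U D lam L` : `L` is a `D`-visit of `U` from `lam`. -/
inductive DVisit (U : Set (List ℕ)) : List ℕ → List ℕ → List (List ℕ) → Prop
  | base (lam : List ℕ) : lam ∈ U → DVisit U [] lam [lam]
  | step (d : ℕ) (D : List ℕ) (lam : List ℕ) (M : List (List ℕ))
      (Ls : List (List (List ℕ))) :
      DVisit U D lam M →
      (1 < Ls.length → DComplete U D M) →
      (∀ j : Fin Ls.length, Ls.get j ≠ []) →
      (∀ j : Fin Ls.length, DExpansion U M j.1 d ((Ls.get j).headI)) →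
      (∀ j : Fin Ls.length, DVisit U (D ++ [d]) ((Ls.get j).headI) (Ls.get j)) →
      (∀ j : Fin Ls.length, j.1 + 1 < Ls.length → DComplete U (d :: D) (Ls.get j)) →
      DVisit U (d :: D) lam (M ++ Ls.flatten)

private lemma splitD {d : ℕ} : ∀ (s s' t t' : List ℕ), d ∉ s → d ∉ s' →
    s ++ d :: t = s' ++ d :: t' → s = s' ∧ t = t' := by
  intro s
  induction s with
  | nil =>
    intro s' t t' _ hs' h
    cases s' with
    | nil => simpa using h
    | cons b s' =>
      simp only [List.nil_append, List.cons_append, List.cons.injEq] at h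
      exact absurd (h.1 ▸ List.mem_cons_self (a := b) (l := s')) hs'
  | cons a s ih =>
    intro s' t t' hs hs' h
    cases s' with
    | nil =>
      simp only [List.nil_append, List.cons_append, List.cons.injEq] at h
      exact absurd (h.1 ▸ List.mem_cons_self (a := a) (l := s)) hs
    | cons b s' =>
      simp only [List.cons_append, List.cons.injEq] at h
      obtain ⟨hab, hrest⟩ := h
      obtain ⟨h1, h2⟩ := ih s' t t' (fun hd => hs (List.mem_cons_of_mem _ hd))
        (fun hd => hs' (List.mem_cons_of_mem _ hd)) hrest
      exact ⟨by rw [hab, h1], h2⟩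

private lemma two_prefix (a b c : List ℕ) (h1 : a <+: c) (h2 : b <+: c) :
    a <+: b ∨ b <+: a := by
  rcases le_total a.length b.length with h | h
  · exact Or.inl (List.prefix_of_prefix_length_le h1 h2 h)
  · exact Or.inr (List.prefix_of_prefix_length_le h2 h1 h)


private lemma dvisit_strong (U : Set (List ℕ)) {D lam : List ℕ}
    {L : List (List ℕ)} (hL : DVisit U D lam L) : D.Nodup →
    L.Nodup ∧ lam ∈ L ∧
      (∀ μ ∈ L, μ ∈ U ∧ ∃ η : List ℕ, μ = lam ++ η ∧ ∀ c ∈ η, c ∈ D) ∧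
      (∀ μ ∈ L, ∀ η : List ℕ, lam <+: η → η <+: μ → η ∈ L) := by
  induction hL with
  | base lam hlam =>
    intro _
    refine ⟨List.nodup_singleton lam, List.mem_singleton_self lam, ?_, ?_⟩
    · intro μ hμ
      rw [List.mem_singleton] at hμ
      subst hμ
      exact ⟨hlam, [], by simp⟩
    · intro μ hμ η h1 h2
      rw [List.mem_singleton] at hμ
      subst hμ
      rw [List.mem_singleton]
      exact (h1.eq_of_length (le_antisymm h1.length_le h2.length_le)).symm
  | step d D lam M Ls hM hcomp hne hexp hvis hLcomp ihM ihLs =>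
    intro hDnd
    obtain ⟨hdD, hDn⟩ := List.nodup_cons.mp hDnd
    have hDd2 : (D ++ [d]).Nodup :=
      ((List.perm_append_singleton d D).nodup_iff).mpr hDnd
    obtain ⟨hMnd, hlamM, hM3, hM4⟩ := ihM hDn
    have IH : ∀ j : Fin Ls.length, (Ls.get j).Nodup ∧
        (Ls.get j).headI ∈ Ls.get j ∧
        (∀ μ ∈ Ls.get j, μ ∈ U ∧ ∃ η : List ℕ,
          μ = (Ls.get j).headI ++ η ∧ ∀ c ∈ η, c ∈ D ++ [d]) ∧
        (∀ μ ∈ Ls.get j, ∀ η : List ℕ,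
          (Ls.get j).headI <+: η → η <+: μ → η ∈ Ls.get j) :=
      fun j => ihLs j hDd2
    have memflat : ∀ x, x ∈ Ls.flatten ↔ ∃ j : Fin Ls.length, x ∈ Ls.get j := by
      intro x
      rw [List.mem_flatten]
      constructor
      · rintro ⟨l, hl, hx⟩
        obtain ⟨j, rfl⟩ := List.mem_iff_get.mp hl
        exact ⟨j, hx⟩
      · rintro ⟨j, hx⟩
        exact ⟨Ls.get j, Ls.get_mem _, hx⟩
    -- shape of elements of a block
    have shape : ∀ j : Fin Ls.length, ∀ x ∈ Ls.get j, ∃ σ ρ,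
        x = lam ++ (σ ++ d :: ρ) ∧ (∀ c ∈ σ, c ∈ D) ∧ (∀ c ∈ ρ, c ∈ D ++ [d]) ∧
        (Ls.get j).headI = (lam ++ σ) ++ [d] ∧
        (lam ++ σ) ∈ M ∧
        {η | η ∈ M ∧ η ++ [d] ∈ U ∧ List.Lex (· < ·) η (lam ++ σ)}.ncard = j.1
        := by
      intro j x hx
      obtain ⟨_, μ, hμM, heq, hcard⟩ := hexp j
      obtain ⟨_, σ, hσeq, hσD⟩ := hM3 μ hμM
      obtain ⟨_, ρ, hρeq, hρD⟩ := (IH j).2.2.1 x hx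
      subst hσeq
      refine ⟨σ, ρ, ?_, hσD, hρD, heq, hμM, hcard⟩
      rw [hρeq, heq]
      simp
    -- block index is determined by the element
    have blockinj : ∀ (i j : Fin Ls.length) (x : List ℕ),
        x ∈ Ls.get i → x ∈ Ls.get j → i = j := by
      intro i j x hxi hxj
      obtain ⟨σi, ρi, hei, hσi, _, _, _, hcardi⟩ := shape i x hxi
      obtain ⟨σj, ρj, hej, hσj, _, _, _, hcardj⟩ := shape j x hxj
      have hcan : σi ++ d :: ρi = σj ++ d :: ρj :=
        List.append_cancel_left (hei ▸ hej)
      have hσ : σi = σj :=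
        (splitD σi σj ρi ρj (fun h => hdD (hσi d h)) (fun h => hdD (hσj d h))
          hcan).1
      subst hσ
      rw [hcardi] at hcardj
      exact Fin.ext hcardj
    -- elements of flatten are not in M
    have hdisj : M.Disjoint Ls.flatten := by
      intro x hxM hxF
      obtain ⟨j, hxj⟩ := (memflat x).mp hxF
      obtain ⟨σ, ρ, he, _, _, _, _, _⟩ := shape j x hxj
      obtain ⟨_, η, heM, hηD⟩ := hM3 x hxM
      have : η = σ ++ d :: ρ := List.append_cancel_left (heM ▸ he)
      exact hdD (hηD d (this ▸ List.mem_append_right σ (List.mem_cons_self (a := d) (l := ρ))))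
    refine ⟨?_, List.mem_append_left _ hlamM, ?_, ?_⟩
    · -- Nodup
      rw [List.nodup_append]
      refine ⟨hMnd, ?_, fun a ha b hb hab => by subst hab; exact hdisj ha hb⟩
      rw [List.nodup_flatten]
      constructor
      · intro l hl
        obtain ⟨j, rfl⟩ := List.mem_iff_get.mp hl
        exact (IH j).1
      · rw [List.pairwise_iff_get]
        intro i j hij x hxi hxj
        exact absurd (blockinj i j x hxi hxj) (Fin.ne_of_lt hij)
    · -- membership / shape
      intro μ hμ
      rcases List.mem_append.mp hμ with h | h
      · obtain ⟨hU', η, he, hc⟩ := hM3 μ h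
        exact ⟨hU', η, he, fun c hc' => List.mem_cons_of_mem d (hc c hc')⟩
      · obtain ⟨j, hxj⟩ := (memflat μ).mp h
        obtain ⟨σ, ρ, he, hσD, hρD, _, _, _⟩ := shape j μ hxj
        have hU' : μ ∈ U := ((IH j).2.2.1 μ hxj).1
        refine ⟨hU', σ ++ d :: ρ, he, ?_⟩
        intro c hc
        rcases List.mem_append.mp hc with h1 | h1
        · exact List.mem_cons_of_mem d (hσD c h1)
        · rcases List.mem_cons.mp h1 with h2 | h2
          · exact h2 ▸ List.mem_cons_self (a := d) (l := D)
          · rcases List.mem_append.mp (hρD c h2) with h3 | h3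
            · exact List.mem_cons_of_mem d h3
            · exact (List.mem_singleton.mp h3) ▸ List.mem_cons_self (a := d) (l := D)
    · -- prefix closure
      intro μ hμ η hlamη hημ
      rcases List.mem_append.mp hμ with h | h
      · exact List.mem_append_left _ (hM4 μ h η hlamη hημ)
      · obtain ⟨j, hxj⟩ := (memflat μ).mp h
        obtain ⟨_, ρ, hρeq, _⟩ := (IH j).2.2.1 μ hxj
        have hhdμ : (Ls.get j).headI <+: μ := ⟨ρ, hρeq.symm⟩
        rcases two_prefix η _ μ hημ hhdμ with hcase | hcase
        · -- η is a prefix of the head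
          by_cases heq : η = (Ls.get j).headI
          · exact List.mem_append_right _ ((memflat η).mpr ⟨j, heq ▸ (IH j).2.1⟩)
          · obtain ⟨σ, ρ', he, hσD, _, hhd, hμM, _⟩ := shape j μ hxj
            rw [hhd] at hcase heq
            have hlen : η.length ≤ (lam ++ σ).length := by
              have h1 := hcase.length_le
              rw [List.length_append (as := lam ++ σ) (bs := [d]), List.length_singleton] at h1
              rcases Nat.lt_or_ge η.length ((lam ++ σ).length + 1) with h2 | h2
              · omega
              · exact absurd (hcase.eq_of_length (by
                  rw [List.length_append (as := lam ++ σ) (bs := [d]), List.length_singleton]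
                  omega)) heq
            have hpre : η <+: lam ++ σ :=
              List.prefix_of_prefix_length_le hcase (List.prefix_append _ _) hlen
            exact List.mem_append_left _ (hM4 _ hμM η hlamη hpre)
        · -- η extends the head: it is in the block
          refine List.mem_append_right _ ((memflat η).mpr ⟨j, ?_⟩)
          exact (IH j).2.2.2 μ hxj η hcase hημ

/-- `U_D(lam)`: the nodes of `U` extending `lam` by a suffix with colors only from `D`. -/
def subtreeD (U : Set (List ℕ)) (D : List ℕ) (lam : List ℕ) : Set (List ℕ) :=
  {μ | μ ∈ U ∧ ∃ η : List ℕ, μ = lam ++ η ∧ ∀ c ∈ η, c ∈ D}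

/-- `f` enumerates the complete `D`-visit of `U` from `lam`:
each initial segment `[f 0, …, f m]` is a `D`-visit from `lam`. -/
def Enumerates (U : Set (List ℕ)) (D lam : List ℕ) (f : ℕ → List ℕ) : Prop :=
  ∀ m : ℕ, DVisit U D lam ((List.range (m + 1)).map f)

/-- `μ` is stable for the enumeration `f`: all later nodes are proper descendants of `μ`. -/
def Stable (f : ℕ → List ℕ) (μ : List ℕ) : Prop :=
  ∃ m, f m = μ ∧ ∀ n, m < n → μ <+: f n ∧ μ ≠ f n

/-- `r` is an infinite branch of the tree `T` (of finite lists): an infinite chain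
under the prefix order, downward closed within `T`. -/
def IsInfBranchL (T : Set (List ℕ)) (r : Set (List ℕ)) : Prop :=
  r ⊆ T ∧ r.Infinite ∧ (∀ μ ∈ r, ∀ ν ∈ r, μ <+: ν ∨ ν <+: μ) ∧
  (∀ μ ∈ r, ∀ η ∈ T, η <+: μ → η ∈ r)

/-- Any D-visit L from lam has no repetitions, and its set of elements,
ordered by the prefix relation, is a subtree of U rooted at lam. -/
theorem dvisit_nodup_subtree (k : ℕ) (U : Set (List ℕ)) (hU : IsKTree k U)
    (D : List ℕ) (hDnd : D.Nodup) (hDk : ∀ d ∈ D, d < k)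
    (lam : List ℕ) (hlam : lam ∈ U)
    (L : List (List ℕ)) (hL : DVisit U D lam L) :
    L.Nodup ∧ lam ∈ L ∧ (∀ μ ∈ L, μ ∈ U ∧ lam <+: μ) ∧
      (∀ μ ∈ L, ∀ η : List ℕ, lam <+: η → η <+: μ → η ∈ L) := by
  obtain ⟨h1, h2, h3, h4⟩ := dvisit_strong U hL hDnd
  refine ⟨h1, h2, fun μ hμ => ⟨(h3 μ hμ).1, ?_⟩, h4⟩
  obtain ⟨_, η, he, _⟩ := h3 μ hμ
  exact ⟨η, he.symm⟩
end

section
/- If L is a D-visit from λ in a k-ary tree U, then the set of elements of L is a subtree of U_D(λ), the tree of all extensions of λ in U whose added suffix uses only colors from D; moreover, if L is D-complete then the set of elements of L equals U_D(λ). -/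
lemma headI_mem_of_ne_nil {α : Type*} [Inhabited α] {x : List α} (h : x ≠ []) : x.headI ∈ x := by
  cases x with
  | nil => exact absurd rfl h
  | cons a t => exact List.mem_cons_self

lemma dvisit_aux (U : Set (List ℕ)) {D lam : List ℕ} {L : List (List ℕ)}
    (h : DVisit U D lam L) :
    (∀ μ ∈ L, μ ∈ subtreeD U D lam) ∧ lam ∈ L ∧
      ∀ μ ∈ L, ∀ η : List ℕ, lam <+: η → η <+: μ → η ∈ L := by
  induction h with
  | base lam hlam =>
    refine ⟨?_, List.mem_singleton.2 rfl, ?_⟩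
    · intro μ hμ
      rw [List.mem_singleton] at hμ
      subst hμ
      exact ⟨hlam, [], by simp⟩
    · intro μ hμ η h1 h2
      rw [List.mem_singleton] at hμ
      subst hμ
      rw [List.mem_singleton]
      exact h2.eq_of_length_le (h1.length_le)
  | step d D lam M Ls hM hcompM hne hexp hvis hcompj ihM ihs =>
    obtain ⟨ihM1, ihM2, ihM3⟩ := ihM
    -- key facts about each block
    have hblock : ∀ j : Fin Ls.length, ∃ μ₀ ∈ M, (Ls.get j).headI = μ₀ ++ [d] := by
      intro j
      obtain ⟨_, μ₀, hμ₀, heq, _⟩ := hexp j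
      exact ⟨μ₀, hμ₀, heq⟩
    have hsub : ∀ j : Fin Ls.length, ∀ μ ∈ Ls.get j, μ ∈ subtreeD U (d :: D) lam := by
      intro j μ hμ
      obtain ⟨hμU, η, heqμ, hη⟩ := (ihs j).1 μ hμ
      obtain ⟨μ₀, hμ₀M, hhead⟩ := hblock j
      obtain ⟨_, η₀, heq₀, hη₀⟩ := ihM1 μ₀ hμ₀M
      refine ⟨hμU, η₀ ++ [d] ++ η, ?_, ?_⟩
      · rw [heqμ, hhead, heq₀]; simp
      · intro c hc
        simp only [List.mem_append, List.mem_singleton] at hc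
        rcases hc with (hc | hc) | hc
        · exact List.mem_cons_of_mem _ (hη₀ c hc)
        · subst hc; exact List.mem_cons_self
        · have := hη c hc
          simp only [List.mem_append, List.mem_singleton] at this
          rcases this with hc' | hc'
          · exact List.mem_cons_of_mem _ hc'
          · subst hc'; exact List.mem_cons_self
    refine ⟨?_, ?_, ?_⟩
    · intro μ hμ
      rcases List.mem_append.1 hμ with hμ | hμ
      · obtain ⟨hμU, η, heq, hη⟩ := ihM1 μ hμ
        exact ⟨hμU, η, heq, fun c hc => List.mem_cons_of_mem _ (hη c hc)⟩
      · obtain ⟨l, hl, hμl⟩ := List.mem_flatten.1 hμ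
        obtain ⟨j, rfl⟩ := List.mem_iff_get.1 hl
        exact hsub j μ hμl
    · exact List.mem_append.2 (Or.inl ihM2)
    · intro μ hμ η h1 h2
      rcases List.mem_append.1 hμ with hμ | hμ
      · exact List.mem_append.2 (Or.inl (ihM3 μ hμ η h1 h2))
      · obtain ⟨l, hl, hμl⟩ := List.mem_flatten.1 hμ
        obtain ⟨j, rfl⟩ := List.mem_iff_get.1 hl
        obtain ⟨μ₀, hμ₀M, hhead⟩ := hblock j
        have hmemflat : ∀ ν ∈ Ls.get j, ν ∈ M ++ Ls.flatten := fun ν hν =>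
          List.mem_append.2 (Or.inr (List.mem_flatten.2 ⟨Ls.get j, List.mem_iff_get.2 ⟨j, rfl⟩, hν⟩))
        -- headI is a prefix of μ
        have hh : (Ls.get j).headI <+: μ := by
          obtain ⟨_, η', heq', _⟩ := (ihs j).1 μ hμl
          exact ⟨η', heq'.symm⟩
        rcases List.prefix_or_prefix_of_prefix h2 hh with hc | hc
        · -- η <+: headI = μ₀ ++ [d]
          rw [hhead] at hc
          rcases List.prefix_concat_iff.1 hc with hc | hc
          · -- η is the head itself
            have : η ∈ Ls.get j := by
              rw [hc, ← hhead]
              exact headI_mem_of_ne_nil (hne j)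
            exact hmemflat η this
          · exact List.mem_append.2 (Or.inl (ihM3 μ₀ hμ₀M η h1 hc))
        · exact hmemflat η ((ihs j).2.2 μ hμl η hc h2)

/-- A D-visit from lam is a subtree of U_D(lam), and equals U_D(lam)
whenever it is D-complete. -/
theorem dvisit_subtreeD (k : ℕ) (U : Set (List ℕ)) (hU : IsKTree k U)
    (D : List ℕ) (hDnd : D.Nodup) (hDk : ∀ d ∈ D, d < k)
    (lam : List ℕ) (hlam : lam ∈ U)
    (L : List (List ℕ)) (hL : DVisit U D lam L) :
    (∀ μ ∈ L, μ ∈ subtreeD U D lam) ∧ lam ∈ L ∧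
      (∀ μ ∈ L, ∀ η : List ℕ, lam <+: η → η <+: μ → η ∈ L) ∧
      (DComplete U D L → {μ | μ ∈ L} = subtreeD U D lam) := by
  obtain ⟨h1, h2, h3⟩ := dvisit_aux U hL
  refine ⟨h1, h2, h3, ?_⟩
  intro hcomp
  ext μ
  simp only [Set.mem_setOf_eq]
  constructor
  · exact h1 μ
  · rintro ⟨hμU, η, rfl, hη⟩
    clear hL
    induction η using List.reverseRecOn with
    | nil => simpa using h2
    | append_singleton η c ih =>
      have hpre : lam ++ η ∈ U := by
        refine hU.2.1 _ hμU (lam ++ η) ⟨[c], by simp⟩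
      have hmem : lam ++ η ∈ L := by
        exact ih (fun x hx => hη x (List.mem_append.2 (Or.inl hx))) hpre
      have hc : c ∈ D := hη c (by simp)
      have := hcomp (lam ++ η) hmem c hc (by rw [List.append_assoc]; exact hμU)
      rwa [List.append_assoc] at this
end

section
/- If L and L′ are both D-visits from λ in a k-ary tree U, and L is a prefix of L′, and L is D-complete, then L = L′. -/
lemma first_split {d : ℕ} {l : List ℕ} (h : d ∈ l) :
    ∃ s t, l = s ++ d :: t ∧ d ∉ s := by
  induction l with
  | nil => cases h
  | cons x xs ih =>
    by_cases hx : x = d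
    · exact ⟨[], xs, by simp [hx], by simp⟩
    · rcases List.mem_cons.mp h with h' | h'
      · exact absurd h'.symm hx
      · obtain ⟨s, t, rfl, hs⟩ := ih h'
        refine ⟨x :: s, t, rfl, ?_⟩
        simp only [List.mem_cons, not_or]
        exact ⟨fun hh => hx hh.symm, hs⟩

lemma first_d {d : ℕ} : ∀ (a a' b b' : List ℕ), a ++ d :: b = a' ++ d :: b' →
    d ∉ a → d ∉ a' → a = a' ∧ b = b' := by
  intro a
  induction a with
  | nil =>
    intro a' b b' h ha ha'
    cases a' with
    | nil => simpa using h
    | cons y ys =>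
      simp only [List.nil_append, List.cons_append, List.cons.injEq] at h
      exact absurd (by simp [h.1]) ha'
  | cons x xs ih =>
    intro a' b b' h ha ha'
    cases a' with
    | nil =>
      simp only [List.cons_append, List.nil_append, List.cons.injEq] at h
      exact absurd (by simp [h.1]) ha
    | cons y ys =>
      simp only [List.cons_append, List.cons.injEq] at h
      obtain ⟨rfl, h2⟩ := h
      have := ih ys b b' h2 (fun hm => ha (List.mem_cons_of_mem _ hm))
        (fun hm => ha' (List.mem_cons_of_mem _ hm))
      exact ⟨by rw [this.1], this.2⟩

lemma dexp_inj {U : Set (List ℕ)} {M : List (List ℕ)} {n m d : ℕ} {ν : List ℕ}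
    (h1 : DExpansion U M n d ν) (h2 : DExpansion U M m d ν) : n = m := by
  obtain ⟨_, μ1, _, rfl, hc1⟩ := h1
  obtain ⟨_, μ2, _, he, hc2⟩ := h2
  have hμ : μ1 = μ2 := List.append_cancel_right he
  subst hμ
  rw [← hc1, ← hc2]

lemma dvisit_mem_sub {U : Set (List ℕ)} {D lam : List ℕ} {L : List (List ℕ)}
    (h : DVisit U D lam L) :
    ∀ μ ∈ L, μ ∈ U ∧ ∃ η, μ = lam ++ η ∧ ∀ c ∈ η, c ∈ D := by
  induction h with
  | base lam hlam =>
    intro μ hμ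
    simp only [List.mem_singleton] at hμ
    subst hμ
    exact ⟨hlam, [], by simp⟩
  | step d D lam M Ls hM hcM hne hexp hvis hcomp ihM ihLs =>
    intro μ hμ
    rcases List.mem_append.mp hμ with hμ | hμ
    · obtain ⟨hu, η, rfl, hη⟩ := ihM μ hμ
      exact ⟨hu, η, rfl, fun c hc => List.mem_cons_of_mem _ (hη c hc)⟩
    · obtain ⟨l, hl, hμl⟩ := List.mem_flatten.mp hμ
      obtain ⟨j, rfl⟩ := List.mem_iff_get.mp hl
      obtain ⟨hu, η, hμeq, hη⟩ := ihLs j μ hμl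
      obtain ⟨_, ν, hνM, hhead, _⟩ := hexp j
      obtain ⟨_, ζ, hνeq, hζ⟩ := ihM ν hνM
      refine ⟨hu, ζ ++ d :: η, ?_, ?_⟩
      · rw [hμeq, hhead, hνeq]; simp
      · intro c hc
        rcases List.mem_append.mp hc with hc | hc
        · exact List.mem_cons_of_mem _ (hζ c hc)
        · rcases List.mem_cons.mp hc with rfl | hc
          · exact List.mem_cons_self
          · rcases List.mem_append.mp (hη c hc) with hc | hc
            · exact List.mem_cons_of_mem _ hc
            · simp only [List.mem_singleton] at hc
              simp [hc]

lemma dvisit_lam_mem {U : Set (List ℕ)} {D lam : List ℕ} {L : List (List ℕ)}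
    (h : DVisit U D lam L) : lam ∈ L := by
  induction h with
  | base lam hlam => simp
  | step d D lam M Ls hM hcM hne hexp hvis hcomp ihM ihLs =>
    exact List.mem_append_left _ ihM

/-- Structure of elements of the pieces in a step. -/
lemma step_struct {U : Set (List ℕ)} {d : ℕ} {D lam : List ℕ} {M : List (List ℕ)}
    {Ls : List (List (List ℕ))}
    (hM : DVisit U D lam M)
    (hexp : ∀ j : Fin Ls.length, DExpansion U M j.1 d ((Ls.get j).headI))
    (hvis : ∀ j : Fin Ls.length, DVisit U (D ++ [d]) ((Ls.get j).headI) (Ls.get j)) :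
    ∀ j : Fin Ls.length, ∀ x ∈ Ls.get j, ∃ ζ η, x = lam ++ ζ ++ d :: η ∧
      (∀ c ∈ ζ, c ∈ D) ∧ (Ls.get j).headI = lam ++ ζ ++ [d] := by
  intro j x hx
  obtain ⟨_, ν, hνM, hhead, _⟩ := hexp j
  obtain ⟨_, ζ, hνeq, hζ⟩ := dvisit_mem_sub hM ν hνM
  obtain ⟨_, η, hxeq, hη⟩ := dvisit_mem_sub (hvis j) x hx
  refine ⟨ζ, η, ?_, hζ, by rw [hhead, hνeq]⟩
  rw [hxeq, hhead, hνeq]; simp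

lemma dvisit_nodup {U : Set (List ℕ)} {D lam : List ℕ} {L : List (List ℕ)}
    (h : DVisit U D lam L) : D.Nodup → L.Nodup := by
  induction h with
  | base lam hlam => intro _; simp
  | step d D lam M Ls hM hcM hne hexp hvis hcomp ihM ihLs =>
    intro hD
    obtain ⟨hdD, hDn⟩ := List.nodup_cons.mp hD
    have hDd : (D ++ [d]).Nodup := by
      rw [List.nodup_append]
      refine ⟨hDn, List.nodup_singleton d, ?_⟩
      intro a ha b hb hab
      rw [List.mem_singleton] at hb
      subst hb; subst hab
      exact hdD ha
    have hstruct := step_struct hM hexp hvis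
    rw [List.nodup_append]
    refine ⟨ihM hDn, ?_, ?_⟩
    · rw [List.nodup_flatten]
      constructor
      · intro l hl
        obtain ⟨j, rfl⟩ := List.mem_iff_get.mp hl
        exact ihLs j hDd
      · rw [List.pairwise_iff_get]
        intro i j hij x hxi hxj
        obtain ⟨ζ1, η1, he1, hζ1, hh1⟩ := hstruct i x hxi
        obtain ⟨ζ2, η2, he2, hζ2, hh2⟩ := hstruct j x hxj
        have heq : ζ1 ++ d :: η1 = ζ2 ++ d :: η2 := by
          apply List.append_cancel_left (as := lam)
          rw [← List.append_assoc, ← List.append_assoc, ← he1, ← he2]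
        have hfd := first_d ζ1 ζ2 η1 η2 heq
          (fun hm => hdD (hζ1 d hm)) (fun hm => hdD (hζ2 d hm))
        have hheads : (Ls.get i).headI = (Ls.get j).headI := by
          rw [hh1, hh2, hfd.1]
        have : i = j := Fin.ext (dexp_inj (hheads ▸ hexp i) (hexp j))
        exact absurd this (Fin.ne_of_lt hij)
    · intro x hxM y hxF hxy
      rw [← hxy] at hxF
      obtain ⟨l, hl, hxl⟩ := List.mem_flatten.mp hxF
      obtain ⟨j, rfl⟩ := List.mem_iff_get.mp hl
      obtain ⟨ζ, η, he, hζ, _⟩ := hstruct j x hxl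
      obtain ⟨_, η', he', hη'⟩ := dvisit_mem_sub hM x hxM
      have : η' = ζ ++ d :: η := by
        apply List.append_cancel_left (as := lam)
        rw [← he', he]; simp
      exact hdD (hη' d (this ▸ (by simp : d ∈ ζ ++ d :: η)))

lemma dvisit_covers {U : Set (List ℕ)}
    (hUp : ∀ l ∈ U, ∀ p : List ℕ, p <+: l → p ∈ U) {D lam : List ℕ}
    {L : List (List ℕ)} (h : DVisit U D lam L) :
    D.Nodup → DComplete U D L → ∀ μ ∈ subtreeD U D lam, μ ∈ L := by
  induction h with
  | base lam hlam =>
    intro _ _ μ hμ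
    obtain ⟨_, η, rfl, hη⟩ := hμ
    have hnil : η = [] := List.eq_nil_iff_forall_not_mem.mpr
      (fun c hc => by simpa using hη c hc)
    simp [hnil]
  | step d D lam M Ls hM hcM hne hexp hvis hcomp ihM ihLs =>
    intro hD hcom μ hμ
    obtain ⟨hdD, hDn⟩ := List.nodup_cons.mp hD
    have hDd : (D ++ [d]).Nodup := by
      rw [List.nodup_append]
      refine ⟨hDn, List.nodup_singleton d, ?_⟩
      intro a ha b hb hab
      rw [List.mem_singleton] at hb
      subst hb; subst hab
      exact hdD ha
    have hstruct := step_struct hM hexp hvis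
    -- completeness of M
    have hMc : DComplete U D M := by
      intro ν hν e he hUe
      have hνL := hcom ν (List.mem_append_left _ hν) e (List.mem_cons_of_mem _ he) hUe
      rcases List.mem_append.mp hνL with h' | h'
      · exact h'
      · exfalso
        obtain ⟨l, hl, hx⟩ := List.mem_flatten.mp h'
        obtain ⟨j, rfl⟩ := List.mem_iff_get.mp hl
        obtain ⟨ζ, η, heq, hζ, _⟩ := hstruct j _ hx
        obtain ⟨_, η', hνeq, hη'⟩ := dvisit_mem_sub hM ν hν
        have heq2 : η' ++ [e] = ζ ++ d :: η := by
          apply List.append_cancel_left (as := lam)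
          rw [← List.append_assoc, ← hνeq, heq]; simp
        have hd : d ∈ η' ++ [e] := heq2 ▸ (by simp : d ∈ ζ ++ d :: η)
        rcases List.mem_append.mp hd with hd | hd
        · exact hdD (hη' d hd)
        · simp only [List.mem_singleton] at hd
          exact hdD (hd ▸ he)
    -- completeness of each piece
    have hLc : ∀ j : Fin Ls.length, DComplete U (D ++ [d]) (Ls.get j) := by
      intro j ν hν e he hUe
      have hνmem : ν ∈ M ++ Ls.flatten := List.mem_append_right _
        (List.mem_flatten.mpr ⟨Ls.get j, List.get_mem Ls j, hν⟩)
      have he' : e ∈ d :: D := by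
        rcases List.mem_append.mp he with h' | h'
        · exact List.mem_cons_of_mem _ h'
        · simp only [List.mem_singleton] at h'
          simp [h']
      have hνe := hcom ν hνmem e he' hUe
      obtain ⟨ζ, η, heq, hζ, hh⟩ := hstruct j ν hν
      rcases List.mem_append.mp hνe with h' | h'
      · exfalso
        obtain ⟨_, η', hνeq, hη'⟩ := dvisit_mem_sub hM _ h'
        have heq2 : η' = ζ ++ d :: (η ++ [e]) := by
          apply List.append_cancel_left (as := lam)
          rw [← hνeq, heq]; simp
        exact hdD (hη' d (heq2 ▸ (by simp : d ∈ ζ ++ d :: (η ++ [e]))))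
      · obtain ⟨l, hl, hx⟩ := List.mem_flatten.mp h'
        obtain ⟨j', rfl⟩ := List.mem_iff_get.mp hl
        obtain ⟨ζ', η₂, heq', hζ', hh'⟩ := hstruct j' _ hx
        have heq3 : ζ ++ d :: (η ++ [e]) = ζ' ++ d :: η₂ := by
          apply List.append_cancel_left (as := lam)
          rw [← List.append_assoc, ← List.append_assoc, ← heq']
          rw [heq]; simp
        have hfd := first_d ζ ζ' (η ++ [e]) η₂ heq3
          (fun hm => hdD (hζ d hm)) (fun hm => hdD (hζ' d hm))
        have hheads : (Ls.get j).headI = (Ls.get j').headI := by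
          rw [hh, hh', hfd.1]
        have hjj : j = j' := Fin.ext (dexp_inj (hheads ▸ hexp j) (hexp j'))
        rw [hjj]; exact hx
    obtain ⟨hμU, η, rfl, hη⟩ := hμ
    by_cases hdη : d ∈ η
    · obtain ⟨ζ, ρ, rfl, hζd⟩ := first_split hdη
      have hζD : ∀ c ∈ ζ, c ∈ D := by
        intro c hc
        rcases List.mem_cons.mp (hη c (by simp [hc])) with rfl | hc'
        · exact absurd hc hζd
        · exact hc'
      have hνU : lam ++ ζ ∈ U := hUp _ hμU _ ⟨d :: ρ, by simp⟩
      have hνM : lam ++ ζ ∈ M := ihM hDn hMc _ ⟨hνU, ζ, rfl, hζD⟩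
      have hνdU : (lam ++ ζ) ++ [d] ∈ U := hUp _ hμU _ ⟨ρ, by simp⟩
      have hνdL := hcom _ (List.mem_append_left _ hνM) d List.mem_cons_self hνdU
      rcases List.mem_append.mp hνdL with h' | h'
      · exfalso
        obtain ⟨_, η', hνeq, hη'⟩ := dvisit_mem_sub hM _ h'
        have heq2 : η' = ζ ++ d :: [] := by
          apply List.append_cancel_left (as := lam)
          rw [← hνeq]; simp
        exact hdD (hη' d (heq2 ▸ (by simp : d ∈ ζ ++ d :: [])))
      · obtain ⟨l, hl, hx⟩ := List.mem_flatten.mp h'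
        obtain ⟨j, rfl⟩ := List.mem_iff_get.mp hl
        obtain ⟨ζ', η₂, heq', hζ', hh'⟩ := hstruct j _ hx
        have heq3 : ζ ++ d :: [] = ζ' ++ d :: η₂ := by
          apply List.append_cancel_left (as := lam)
          rw [← List.append_assoc, ← List.append_assoc]
          exact heq'
        have hfd := first_d ζ ζ' [] η₂ heq3 hζd
          (fun hm => hdD (hζ' d hm))
        have hhead : (Ls.get j).headI = (lam ++ ζ) ++ [d] := by
          rw [hh', ← hfd.1]
        have hρ : ∀ c ∈ ρ, c ∈ D ++ [d] := by
          intro c hc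
          rcases List.mem_cons.mp (hη c (by simp [hc])) with rfl | hc'
          · simp
          · exact List.mem_append_left _ hc'
        have hμmem : lam ++ (ζ ++ d :: ρ) ∈ Ls.get j := by
          refine ihLs j hDd (hLc j) _ ⟨hμU, ρ, ?_, hρ⟩
          rw [hhead]; simp
        exact List.mem_append_right _ (List.mem_flatten.mpr
          ⟨Ls.get j, List.get_mem Ls j, hμmem⟩)
    · have hηD : ∀ c ∈ η, c ∈ D := fun c hc =>
        (List.mem_cons.mp (hη c hc)).resolve_left (fun h' => hdη (h' ▸ hc))
      exact List.mem_append_left _ (ihM hDn hMc _ ⟨hμU, η, rfl, hηD⟩)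

/-- a D-complete D-visit is maximal among D-visits from lam w.r.t. prefix. -/
theorem dvisit_complete_maximal (k : ℕ) (U : Set (List ℕ)) (hU : IsKTree k U)
    (D : List ℕ) (hDnd : D.Nodup) (hDk : ∀ d ∈ D, d < k)
    (lam : List ℕ) (hlam : lam ∈ U)
    (L L' : List (List ℕ)) (hL : DVisit U D lam L) (hL' : DVisit U D lam L')
    (hpre : L <+: L') (hcom : DComplete U D L) :
    L = L' := by
  obtain ⟨t, rfl⟩ := hpre
  cases t with
  | nil => simp
  | cons x t' =>
    exfalso
    have hx' : x ∈ L ++ x :: t' := by simp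
    obtain ⟨hxU, hxs⟩ := dvisit_mem_sub hL' x hx'
    have hxL : x ∈ L := dvisit_covers hU.2.1 hL hDnd hcom x ⟨hxU, hxs⟩
    have hnd := dvisit_nodup hL' hDnd
    rw [List.nodup_append] at hnd
    exact hnd.2.2 x hxL x (by simp) rfl
end

section
/- Let U_D(λ) be infinite and let f be the enumeration of the complete D-visit of U from λ (defined by iterating the unique one-step extension of D-visits). If μ₁ and μ₂ are both stable nodes (a node μ = f(m) is stable if every f(n) with n > m is a proper descendant of μ), then μ₁ and μ₂ are comparable under the prefix order; moreover, if μ is stable then U_D(μ) is infinite. -/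
private lemma takeWhile_append_cons (d : ℕ) (s α : List ℕ) (hs : d ∉ s) :
    (s ++ d :: α).takeWhile (fun c => c ≠ d) = s := by
  induction s with
  | nil => simp
  | cons a t ih =>
    simp only [List.mem_cons, not_or] at hs
    rw [List.cons_append, List.takeWhile_cons_of_pos (by simpa using Ne.symm hs.1), ih hs.2]

private lemma eq_of_avoid_eq {d : ℕ} {s t α β : List ℕ} (hs : d ∉ s) (ht : d ∉ t)
    (h : s ++ d :: α = t ++ d :: β) : s = t := by
  have := congrArg (List.takeWhile (fun c => c ≠ d)) h
  rwa [takeWhile_append_cons d s α hs, takeWhile_append_cons d t β ht] at this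

private lemma visit_mem {U : Set (List ℕ)} {D lam : List ℕ} {L : List (List ℕ)}
    (h : DVisit U D lam L) :
    ∀ μ ∈ L, μ ∈ U ∧ ∃ η : List ℕ, μ = lam ++ η ∧ ∀ c ∈ η, c ∈ D := by
  induction h with
  | base lam hlam =>
    intro μ hμ
    simp only [List.mem_singleton] at hμ
    subst hμ
    exact ⟨hlam, [], by simp⟩
  | step d D lam M Ls hM hcomp hne hexp hvis hcomp2 ihM ihLs =>
    intro μ hμ
    rcases List.mem_append.1 hμ with hμ | hμ
    · obtain ⟨hμU, η, he, hη⟩ := ihM μ hμ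
      exact ⟨hμU, η, he, fun c hc => List.mem_cons_of_mem _ (hη c hc)⟩
    · obtain ⟨l, hl, hμl⟩ := List.mem_flatten.1 hμ
      obtain ⟨j, rfl⟩ := List.mem_iff_get.1 hl
      obtain ⟨hμU, η', hμe, hη'⟩ := ihLs j μ hμl
      obtain ⟨_, ν, hνM, hhead, _⟩ := hexp j
      obtain ⟨_, ηj, hνe, hηj⟩ := ihM ν hνM
      refine ⟨hμU, ηj ++ d :: η', by rw [hμe, hhead, hνe]; simp, ?_⟩
      intro c hc
      rcases List.mem_append.1 hc with hc | hc
      · exact List.mem_cons_of_mem _ (hηj c hc)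
      · rcases List.mem_cons.1 hc with rfl | hc
        · exact List.mem_cons_self
        · rcases List.mem_append.1 (hη' c hc) with h1 | h1
          · exact List.mem_cons_of_mem _ h1
          · simp only [List.mem_singleton] at h1
            simp [h1]

private lemma visit_nodup {U : Set (List ℕ)} {D lam : List ℕ} {L : List (List ℕ)}
    (h : DVisit U D lam L) (hD : D.Nodup) : L.Nodup := by
  induction h with
  | base lam hlam => simp
  | step d D lam M Ls hM hcomp hne hexp hvis hcomp2 ihM ihLs =>
    rw [List.nodup_cons] at hD
    obtain ⟨hdD, hDnd⟩ := hD
    have hD' : (D ++ [d]).Nodup := by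
      rw [List.nodup_append]
      exact ⟨hDnd, List.nodup_singleton d, fun a ha b hb hab => hdD (by
        simp only [List.mem_singleton] at hb; rw [hab, hb] at ha; exact ha)⟩
    -- key data for each block
    have key : ∀ j : Fin Ls.length, ∃ s : List ℕ, d ∉ s ∧
        ({η | η ∈ M ∧ η ++ [d] ∈ U ∧ List.Lex (· < ·) η (lam ++ s)}.ncard = j.1) ∧
        ∀ x ∈ Ls.get j, ∃ α, x = lam ++ (s ++ d :: α) := by
      intro j
      obtain ⟨_, ν, hνM, hhead, hcard⟩ := hexp j
      obtain ⟨_, s, rfl, hs⟩ := visit_mem hM ν hνM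
      refine ⟨s, fun hd => hdD (hs d hd), hcard, ?_⟩
      intro x hx
      obtain ⟨_, η', hxe, _⟩ := visit_mem (hvis j) x hx
      exact ⟨η', by rw [hxe, hhead]; simp⟩
    rw [List.nodup_append]
    refine ⟨ihM hDnd, ?_, ?_⟩
    · rw [List.nodup_flatten]
      constructor
      · intro l hl
        obtain ⟨j, rfl⟩ := List.mem_iff_get.1 hl
        exact ihLs j hD'
      · rw [List.pairwise_iff_get]
        intro i j hij x hxi hxj
        obtain ⟨si, hsi, hci, hei⟩ := key i
        obtain ⟨sj, hsj, hcj, hej⟩ := key j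
        obtain ⟨α, hα⟩ := hei x hxi
        obtain ⟨β, hβ⟩ := hej x hxj
        have h1 : si ++ d :: α = sj ++ d :: β :=
          List.append_cancel_left (hα ▸ hβ ▸ rfl : lam ++ (si ++ d :: α) = lam ++ (sj ++ d :: β))
        have h2 : si = sj := eq_of_avoid_eq hsi hsj h1
        rw [h2] at hci
        rw [hci] at hcj
        omega
    · intro x hxM y hxF hxy
      rw [← hxy] at hxF
      obtain ⟨_, t, rfl, ht⟩ := visit_mem hM x hxM
      obtain ⟨l, hl, hxl⟩ := List.mem_flatten.1 hxF
      obtain ⟨j, rfl⟩ := List.mem_iff_get.1 hl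
      obtain ⟨s, hs, _, he⟩ := key j
      obtain ⟨α, hα⟩ := he _ hxl
      have h1 : t = s ++ d :: α := List.append_cancel_left hα
      have : d ∈ t := h1 ▸ List.mem_append.2 (Or.inr (List.mem_cons_self))
      exact hdD (ht d this)

/-- stable nodes of the complete D-visit are comparable by prefix,
and below a stable node the D-subtree is infinite. -/
theorem stable_basic (k : ℕ) (U : Set (List ℕ)) (hU : IsKTree k U)
    (D : List ℕ) (hDnd : D.Nodup) (hDk : ∀ d ∈ D, d < k)
    (lam : List ℕ) (hlam : lam ∈ U)
    (hinf : (subtreeD U D lam).Infinite)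
    (f : ℕ → List ℕ) (hf : Enumerates U D lam f) :
    (∀ μ₁ μ₂ : List ℕ, Stable f μ₁ → Stable f μ₂ → μ₁ <+: μ₂ ∨ μ₂ <+: μ₁) ∧
      (∀ μ : List ℕ, Stable f μ → (subtreeD U D μ).Infinite) := by
  have hmem : ∀ n, f n ∈ subtreeD U D lam := by
    intro n
    have hn : f n ∈ (List.range (n + 1)).map f :=
      List.mem_map.2 ⟨n, List.mem_range.2 (Nat.lt_succ_self n), rfl⟩
    obtain ⟨h1, h2⟩ := visit_mem (hf n) (f n) hn
    exact ⟨h1, h2⟩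
  have hinj : Function.Injective f := by
    intro a b hab
    by_contra hne
    have hnd := visit_nodup (hf (max a b)) hDnd
    have ha : a < ((List.range (max a b + 1)).map f).length := by simp
    have hb : b < ((List.range (max a b + 1)).map f).length := by simp
    have hga : ((List.range (max a b + 1)).map f)[a] = f a := by simp
    have hgb : ((List.range (max a b + 1)).map f)[b] = f b := by simp
    exact hne ((hnd.getElem_inj_iff (hi := ha) (hj := hb)).1 (by rw [hga, hgb, hab]))
  constructor
  · rintro μ₁ μ₂ ⟨m₁, rfl, h₁⟩ ⟨m₂, rfl, h₂⟩
    rcases lt_trichotomy m₁ m₂ with h | rfl | h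
    · exact Or.inl (h₁ m₂ h).1
    · exact Or.inl List.prefix_rfl
    · exact Or.inr (h₂ m₁ h).1
  · rintro μ ⟨m, rfl, hm⟩
    have hsub : f '' Set.Ioi m ⊆ subtreeD U D (f m) := by
      rintro _ ⟨n, hn, rfl⟩
      obtain ⟨hU1, η, he, hη⟩ := hmem n
      obtain ⟨hU2, η₀, he₀, hη₀⟩ := hmem m
      obtain ⟨rest, hrest⟩ := (hm n hn).1
      refine ⟨hU1, rest, hrest.symm, ?_⟩
      have hcancel : η = η₀ ++ rest := by
        apply List.append_cancel_left (as := lam)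
        rw [← he, ← hrest, he₀, List.append_assoc]
      intro c hc
      exact hη c (hcancel ▸ List.mem_append.2 (Or.inr hc))
    exact Set.Infinite.mono hsub
      ((Set.Ioi_infinite m).image (Set.injOn_of_injective hinj))
end

section
/- Let U_D(λ) be infinite and f the enumeration of the complete D-visit from λ. If f(m) is stable, then there exists n > m such that f(n) is stable. Consequently the complete D-visit contains infinitely many stable nodes. -/
-- HELPERS
private lemma take_map_range {α : Type*} (f : ℕ → α) {s n : ℕ} (h : s ≤ n) :
    ((List.range n).map f).take s = (List.range s).map f := by
  apply List.ext_getElem (by simp; omega)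
  intro i h1 h2
  simp

private lemma drop_take_map_range {α : Type*} (f : ℕ → α) {a ℓ m : ℕ} (h : a + ℓ ≤ m + 1) :
    (((List.range (m+1)).map f).drop a).take ℓ = (List.range ℓ).map (fun i => f (a + i)) := by
  apply List.ext_getElem (by simp; omega)
  intro i h1 h2
  simp

private lemma headI_map_range {α : Type*} [Inhabited α] (f : ℕ → α) (ℓ : ℕ) (h : 0 < ℓ) :
    ((List.range ℓ).map f).headI = f 0 := by
  obtain ⟨ℓ', rfl⟩ : ∃ k, ℓ = k + 1 := ⟨ℓ - 1, by omega⟩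
  rw [List.range_succ_eq_map]
  simp

private lemma sum_take_mono {l : List ℕ} {j j' : ℕ} (h : j ≤ j') :
    (l.take j).sum ≤ (l.take j').sum := by
  conv_rhs => rw [← List.take_append_drop j (l.take j')]
  rw [List.take_take, Nat.min_eq_left h, List.sum_append]
  exact Nat.le_add_right _ _

private lemma dvisit_ne_nil {U : Set (List ℕ)} {E lam : List ℕ} {L : List (List ℕ)}
    (h : DVisit U E lam L) : L ≠ [] := by
  induction h with
  | base lam h => simp
  | step d D lam M Ls hM hc hne hexp hpv hcomp ihM ihpv =>
    intro hcon
    exact ihM (List.append_eq_nil_iff.mp hcon).1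

private lemma dvisit_nil_inv {U : Set (List ℕ)} {lam : List ℕ} {L : List (List ℕ)}
    (h : DVisit U [] lam L) : L = [lam] := by
  cases h with
  | base lam h => rfl

private lemma dvisit_cons_inv {U : Set (List ℕ)} {d : ℕ} {D lam : List ℕ} {L : List (List ℕ)}
    (h : DVisit U (d :: D) lam L) :
    ∃ M Ls, L = M ++ List.flatten Ls ∧ DVisit U D lam M ∧
      (∀ j : Fin Ls.length, Ls.get j ≠ []) ∧
      (∀ j : Fin Ls.length, DExpansion U M j.1 d ((Ls.get j).headI)) ∧
      (∀ j : Fin Ls.length, DVisit U (D ++ [d]) ((Ls.get j).headI) (Ls.get j)) := by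
  cases h with
  | step d D lam M Ls hM hc hne hexp hpv hcomp => exact ⟨M, Ls, rfl, hM, hne, hexp, hpv⟩

private lemma dvisit_mem {U : Set (List ℕ)} : ∀ {E lam : List ℕ} {L : List (List ℕ)},
    DVisit U E lam L → ∀ η ∈ L, ∃ w, η = lam ++ w ∧ ∀ c ∈ w, c ∈ E := by
  intro E lam L h
  induction h with
  | base lam h =>
    intro η hη
    rw [List.mem_singleton] at hη
    exact ⟨[], by simp [hη]⟩
  | step d D lam M Ls hM hc hne hexp hpv hcomp ihM ihpv =>
    intro η hη
    rcases List.mem_append.mp hη with hM' | hF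
    · obtain ⟨w, rfl, hw⟩ := ihM η hM'
      exact ⟨w, rfl, fun c hc => List.mem_cons_of_mem _ (hw c hc)⟩
    · rcases List.mem_flatten.mp hF with ⟨pc, hpc, hx⟩
      obtain ⟨j, rfl⟩ := List.mem_iff_get.mp hpc
      obtain ⟨w, hη2, hw⟩ := ihpv j η hx
      obtain ⟨hU, μ, hμM, hhead, -⟩ := hexp j
      obtain ⟨w₁, hμ2, hw₁⟩ := ihM μ hμM
      refine ⟨w₁ ++ d :: w, ?_, ?_⟩
      · rw [hη2, hhead, hμ2]; simp
      · intro c hc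
        rcases List.mem_append.mp hc with h | h
        · exact List.mem_cons_of_mem _ (hw₁ c h)
        · rcases List.mem_cons.mp h with rfl | h
          · exact List.mem_cons_self
          · rcases List.mem_append.mp (hw c h) with h' | h'
            · exact List.mem_cons_of_mem _ h'
            · rw [List.mem_singleton] at h'
              subst h'
              exact List.mem_cons_self

private lemma prefix_dcolor {lam w₁ w₂ : List ℕ} {D : List ℕ} {d : ℕ} (hd : d ∉ D)
    (h1 : ∀ c ∈ w₁, c ∈ D) (h2 : ∀ c ∈ w₂, c ∈ D)
    (h : (lam ++ w₁) ++ [d] <+: (lam ++ w₂) ++ [d]) : w₁ = w₂ := by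
  rcases Nat.lt_trichotomy w₁.length w₂.length with hlt | heq | hgt
  · exfalso
    have hp : (lam ++ w₁) ++ [d] <+: lam ++ w₂ := by
      refine List.prefix_of_prefix_length_le h (List.prefix_append _ _) (by simp; omega)
    obtain ⟨s, hs⟩ := hp
    have hes : lam ++ w₂ = lam ++ (w₁ ++ d :: s) := by
      rw [← hs]; simp
    have : w₂ = w₁ ++ d :: s := List.append_cancel_left hes
    exact hd (h2 d (by rw [this]; simp))
  · have he := List.IsPrefix.eq_of_length h (by simp [heq])
    have := List.append_cancel_right he
    exact List.append_cancel_left this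
  · exfalso
    have := List.IsPrefix.length_le h
    simp at this
    omega

private lemma dexp_eq_of_eq {U : Set (List ℕ)} {M : List (List ℕ)} {d i : ℕ} {ν ν' : List ℕ}
    (h1 : DExpansion U M i d ν) (h2 : DExpansion U M i d ν') : ν = ν' := by
  obtain ⟨hν, μ, hμ, hνd, hc⟩ := h1
  obtain ⟨hν', μ', hμ', hν'd, hc'⟩ := h2
  have key : ∀ (a b : List ℕ), a ∈ M → a ++ [d] ∈ U → List.Lex (· < ·) a b →
      {η | η ∈ M ∧ η ++ [d] ∈ U ∧ List.Lex (· < ·) η a}.ncard <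
      {η | η ∈ M ∧ η ++ [d] ∈ U ∧ List.Lex (· < ·) η b}.ncard := by
    intro a b haM haU hab
    apply Set.ncard_lt_ncard
    · constructor
      · rintro η ⟨k1, k2, k3⟩
        exact ⟨k1, k2, List.lex_trans (fun h1 h2 => lt_trans h1 h2) k3 hab⟩
      · intro hsub
        have : a ∈ {η | η ∈ M ∧ η ++ [d] ∈ U ∧ List.Lex (· < ·) η a} :=
          hsub ⟨haM, haU, hab⟩
        exact absurd this.2.2 (irrefl_of (List.Lex (· < ·)) a)
    · apply Set.Finite.subset (List.finite_toSet M)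
      rintro η ⟨k1, -, -⟩
      exact k1
  rcases @trichotomous _ (List.Lex (· < ·)) (List.Lex.trichotomous _) μ μ' with h | h | h
  · exact absurd (hc.trans hc'.symm) (Nat.ne_of_lt (key μ μ' hμ (hνd ▸ hν) h))
  · rw [hνd, hν'd, h]
  · exact absurd (hc'.trans hc.symm) (Nat.ne_of_lt (key μ' μ hμ' (hν'd ▸ hν') h))

private lemma dexp_ncard_le {U : Set (List ℕ)} {M : List (List ℕ)} {d i : ℕ} {ν : List ℕ}
    (h1 : DExpansion U M i d ν) : i ≤ M.length := by
  obtain ⟨hν, μ, hμ, hνd, hc⟩ := h1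
  rw [← hc]
  have h2 : {η | η ∈ M ∧ η ++ [d] ∈ U ∧ List.Lex (· < ·) η μ} ⊆ ↑M.toFinset := by
    rintro η ⟨k1, -, -⟩; simpa using k1
  calc {η | η ∈ M ∧ η ++ [d] ∈ U ∧ List.Lex (· < ·) η μ}.ncard
      ≤ (↑M.toFinset : Set (List ℕ)).ncard := Set.ncard_le_ncard h2 (M.toFinset.finite_toSet)
    _ = M.toFinset.card := Set.ncard_coe_finset _
    _ ≤ M.length := M.toFinset_card_le

private lemma dvisit_pairwise {U : Set (List ℕ)} : ∀ {E lam : List ℕ} {L : List (List ℕ)},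
    DVisit U E lam L → E.Nodup → L.Pairwise (fun η ρ => ¬ (ρ <+: η)) := by
  intro E lam L h
  induction h with
  | base lam h => intro _; simp
  | step d D lam M Ls hM hc hne hexp hpv hcomp ihM ihpv =>
    intro hnd
    have hdD : d ∉ D := (List.nodup_cons.mp hnd).1
    have hD : D.Nodup := (List.nodup_cons.mp hnd).2
    have hDd : (D ++ [d]).Nodup := by
      rw [List.Perm.nodup_iff (List.perm_append_singleton d D)]; exact hnd
    rw [List.pairwise_append]
    refine ⟨ihM hD, ?_, ?_⟩
    · rw [List.pairwise_flatten]
      constructor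
      · intro pc hpc
        obtain ⟨j, rfl⟩ := List.mem_iff_get.mp hpc
        exact ihpv j hDd
      · rw [List.pairwise_iff_get]
        intro i j hij
        intro x hx y hy hpre
        obtain ⟨wx, hx2, -⟩ := dvisit_mem (hpv i) x hx
        obtain ⟨wy, hy2, -⟩ := dvisit_mem (hpv j) y hy
        obtain ⟨hUi, μi, hμiM, hheadi, hci⟩ := hexp i
        obtain ⟨hUj, μj, hμjM, hheadj, hcj⟩ := hexp j
        obtain ⟨w₁, hμi2, hw₁⟩ := dvisit_mem hM μi hμiM
        obtain ⟨w₂, hμj2, hw₂⟩ := dvisit_mem hM μj hμjM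
        have hpi : μi ++ [d] <+: x := by
          rw [hx2, hheadi]; exact List.prefix_append _ _
        have hpj : μj ++ [d] <+: x := by
          refine List.IsPrefix.trans ?_ hpre
          rw [hy2, hheadj]; exact List.prefix_append _ _
        have hw : w₁ = w₂ := by
          rcases List.prefix_or_prefix_of_prefix hpi hpj with h | h
          · exact prefix_dcolor hdD hw₁ hw₂ (by rwa [hμi2, hμj2] at h)
          · exact (prefix_dcolor hdD hw₂ hw₁ (by rwa [hμi2, hμj2] at h)).symm
        have hμeq : μi = μj := by rw [hμi2, hμj2, hw]
        rw [hμeq] at hci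
        have : i.1 = j.1 := by rw [← hci, ← hcj]
        exact absurd this (Nat.ne_of_lt hij)
    · intro x hxM y hyF hpre
      rcases List.mem_flatten.mp hyF with ⟨pc, hpc, hy⟩
      obtain ⟨j, rfl⟩ := List.mem_iff_get.mp hpc
      obtain ⟨wy, hy2, -⟩ := dvisit_mem (hpv j) y hy
      obtain ⟨hUj, μj, hμjM, hheadj, -⟩ := hexp j
      obtain ⟨w₂, hμj2, -⟩ := dvisit_mem hM μj hμjM
      obtain ⟨wx, hx2, hwx⟩ := dvisit_mem hM x hxM
      have hpj : μj ++ [d] <+: x := by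
        refine List.IsPrefix.trans ?_ hpre
        rw [hy2, hheadj]; exact List.prefix_append _ _
      obtain ⟨s, hs⟩ := hpj
      have hxe : lam ++ wx = lam ++ (w₂ ++ d :: s) := by
        rw [← hx2, ← hs, hμj2]; simp
      have : wx = w₂ ++ d :: s := List.append_cancel_left hxe
      exact hdD (hwx d (by rw [this]; simp))

private lemma stable_aux (U : Set (List ℕ)) :
    ∀ q : ℕ, ∀ E lam : List ℕ, ∀ f : ℕ → List ℕ, E.Nodup → Enumerates U E lam f →
      ∃ n, q < n ∧ Stable f (f n) := by
  intro q
  induction q using Nat.strong_induction_on with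
  | _ q IHq =>
  intro E
  induction E with
  | nil =>
    intro lam f _ henum
    exfalso
    have h := dvisit_nil_inv (henum 1)
    have := congrArg List.length h
    simp at this
  | cons d D IHD =>
    intro lam f hnd henum
    classical
    have hdD : d ∉ D := (List.nodup_cons.mp hnd).1
    have hD : D.Nodup := (List.nodup_cons.mp hnd).2
    have hDd : (D ++ [d]).Nodup := by
      rw [List.Perm.nodup_iff (List.perm_append_singleton d D)]; exact hnd
    have hinj : Function.Injective f := by
      have key : ∀ a b : ℕ, a < b → ¬ (f b <+: f a) := by
        intro a b hab
        have hp := dvisit_pairwise (henum b) hnd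
        rw [List.pairwise_iff_getElem] at hp
        have h1 : a < ((List.range (b+1)).map f).length := by
          simp only [List.length_map, List.length_range]; omega
        have h2 : b < ((List.range (b+1)).map f).length := by
          simp only [List.length_map, List.length_range]; omega
        have := hp a b h1 h2 hab
        simpa using this
      intro a b hab
      rcases Nat.lt_trichotomy a b with h | h | h
      · exact absurd ⟨[], by simp [hab]⟩ (key a b h)
      · exact h
      · exact absurd ⟨[], by simp [hab]⟩ (key b a h)
    by_cases hB : ∃ n, d ∈ (f n).drop lam.length
    case neg =>
      push_neg at hB
      have henum' : Enumerates U D lam f := by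
        intro m
        obtain ⟨M, Ls, hL, hM, hne, hexp, hpv⟩ := dvisit_cons_inv (henum m)
        have hflat : Ls.flatten = [] := by
          by_contra hcon
          obtain ⟨x, hx⟩ := List.exists_mem_of_ne_nil _ hcon
          rcases List.mem_flatten.mp hx with ⟨pc, hpc, hxpc⟩
          obtain ⟨j, rfl⟩ := List.mem_iff_get.mp hpc
          obtain ⟨w, hx2, -⟩ := dvisit_mem (hpv j) x hxpc
          obtain ⟨hU, μ, hμM, hhead, -⟩ := hexp j
          obtain ⟨w₁, hμ2, -⟩ := dvisit_mem hM μ hμM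
          have hxL : x ∈ (List.range (m+1)).map f := by
            rw [hL]; exact List.mem_append_right _ hx
          rcases List.mem_map.mp hxL with ⟨i, -, rfl⟩
          apply hB i
          have hfi : f i = lam ++ (w₁ ++ d :: w) := by rw [hx2, hhead, hμ2]; simp
          rw [hfi, List.drop_left]
          simp
        rw [hflat, List.append_nil] at hL
        rw [hL]
        exact hM
      exact IHD lam f hD henum'
    case pos =>
      set t := Nat.find hB with htdef
      have htd : d ∈ (f t).drop lam.length := Nat.find_spec hB
      have htmin : ∀ i, i < t → d ∉ (f i).drop lam.length := fun i hi => Nat.find_min hB hi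
      have key : ∀ m, t ≤ m → DVisit U D lam ((List.range t).map f) ∧
          ∃ Ls : List (List (List ℕ)),
          (List.range (m+1)).map f = (List.range t).map f ++ Ls.flatten ∧
          (∀ j : Fin Ls.length, Ls.get j ≠ []) ∧
          (∀ j : Fin Ls.length, DExpansion U ((List.range t).map f) j.1 d ((Ls.get j).headI)) ∧
          (∀ j : Fin Ls.length, DVisit U (D ++ [d]) ((Ls.get j).headI) (Ls.get j)) := by
        intro m hm
        obtain ⟨M, Ls, hL, hM, hne, hexp, hpv⟩ := dvisit_cons_inv (henum m)
        have hMeq : M = (List.range t).map f := by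
          have hMlen : M.length ≤ m + 1 := by
            have := congrArg List.length hL
            simp only [List.length_map, List.length_range, List.length_append] at this
            omega
          have hMtake : M = (List.range M.length).map f := by
            have h1 : M = ((List.range (m+1)).map f).take M.length := by
              rw [hL, List.take_left]
            conv_lhs => rw [h1]
            exact take_map_range f (by omega)
          have hflatHasD : ∀ x ∈ Ls.flatten, d ∈ x.drop lam.length := by
            intro x hx
            rcases List.mem_flatten.mp hx with ⟨pc, hpc, hxpc⟩
            obtain ⟨j, rfl⟩ := List.mem_iff_get.mp hpc
            obtain ⟨w, hx2, -⟩ := dvisit_mem (hpv j) x hxpc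
            obtain ⟨hU, μ, hμM, hhead, -⟩ := hexp j
            obtain ⟨w₁, hμ2, -⟩ := dvisit_mem hM μ hμM
            have hfi : x = lam ++ (w₁ ++ d :: w) := by rw [hx2, hhead, hμ2]; simp
            rw [hfi, List.drop_left]; simp
          have hMno : ∀ x ∈ M, d ∉ x.drop lam.length := by
            intro x hx
            obtain ⟨w, rfl, hw⟩ := dvisit_mem hM x hx
            rw [List.drop_left]
            intro hmem; exact hdD (hw d hmem)
          rcases Nat.lt_trichotomy M.length t with h | h | h
          · exfalso
            have hfm : f M.length ∈ (List.range (m+1)).map f :=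
              List.mem_map.mpr ⟨M.length, List.mem_range.mpr (by omega), rfl⟩
            rw [hL] at hfm
            rcases List.mem_append.mp hfm with hin | hin
            · have hin2 : f M.length ∈ (List.range M.length).map f := by
                rw [← hMtake]; exact hin
              rcases List.mem_map.mp hin2 with ⟨i, hi, hieq⟩
              rw [List.mem_range] at hi
              exact absurd (hinj hieq) (by omega)
            · exact htmin M.length h (hflatHasD _ hin)
          · rw [hMtake]; rw [h]
          · exfalso
            have hft : f t ∈ M := by
              have : f t ∈ (List.range M.length).map f :=
                List.mem_map.mpr ⟨t, List.mem_range.mpr h, rfl⟩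
              rw [← hMtake] at this
              exact this
            exact hMno _ hft htd
        subst hMeq
        exact ⟨hM, Ls, hL, hne, hexp, hpv⟩
      have hMfix : DVisit U D lam ((List.range t).map f) := (key t le_rfl).1
      have PUNIQ : ∀ (x : List ℕ) (j : ℕ) (ν : List ℕ) (j' : ℕ) (ν' : List ℕ),
          DExpansion U ((List.range t).map f) j d ν → ν <+: x →
          DExpansion U ((List.range t).map f) j' d ν' → ν' <+: x → j = j' ∧ ν = ν' := by
        intro x j ν j' ν' h1 hp1 h2 hp2
        obtain ⟨hνU, μ, hμM, hνdef, hcard⟩ := h1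
        obtain ⟨hν'U, μ', hμ'M, hν'def, hcard'⟩ := h2
        obtain ⟨w₁, hμw, hw₁⟩ := dvisit_mem hMfix μ hμM
        obtain ⟨w₂, hμ'w, hw₂⟩ := dvisit_mem hMfix μ' hμ'M
        rw [hνdef] at hp1
        rw [hν'def] at hp2
        have hw : w₁ = w₂ := by
          rcases List.prefix_or_prefix_of_prefix hp1 hp2 with h | h
          · exact prefix_dcolor hdD hw₁ hw₂ (by rwa [hμw, hμ'w] at h)
          · exact (prefix_dcolor hdD hw₂ hw₁ (by rwa [hμw, hμ'w] at h)).symm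
        have hμeq : μ = μ' := by rw [hμw, hμ'w, hw]
        constructor
        · rw [← hcard, ← hcard', hμeq]
        · rw [hνdef, hν'def, hμeq]
      have BLOCK : ∀ m, t ≤ m → ∀ n, t ≤ n → n ≤ m →
          ∃ (j : ℕ) (ν : List ℕ), DExpansion U ((List.range t).map f) j d ν ∧ ν <+: f n ∧
          (∀ n' j' ν', t ≤ n' → n' ≤ m → n ≤ n' →
            DExpansion U ((List.range t).map f) j' d ν' → ν' <+: f n' → j ≤ j') ∧
          ((∀ n', n ≤ n' → n' ≤ m → ∀ j' ν',
              DExpansion U ((List.range t).map f) j' d ν' → ν' <+: f n' → j' ≤ j) →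
           (∀ n', t ≤ n' → n' < n → ∀ j' ν',
              DExpansion U ((List.range t).map f) j' d ν' → ν' <+: f n' → j' < j) →
           (ν = f n ∧ DVisit U (D ++ [d]) (f n)
             ((List.range (m + 1 - n)).map (fun i => f (n + i))))) := by
        intro m hm n hnt hnm
        obtain ⟨Ls, hL, hne, hexp, hpv⟩ := (key m hm).2
        set b : ℕ → ℕ := fun j => t + ((Ls.map List.length).take j).sum with hbdef
        have hb0 : b 0 = t := by simp [hbdef]
        have hbp : b Ls.length = m + 1 := by
          have h2 := congrArg List.length hL
          simp only [List.length_map, List.length_range, List.length_append,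
            List.length_flatten] at h2
          have h3 : (Ls.map List.length).take Ls.length = Ls.map List.length :=
            List.take_of_length_le (by simp)
          simp only [hbdef, h3]
          omega
        have hbsucc : ∀ j (hj : j < Ls.length), b (j+1) = b j + (Ls.get ⟨j, hj⟩).length := by
          intro j hj
          have h5 : j < (Ls.map List.length).length := by simpa using hj
          have h6 := List.sum_take_succ (Ls.map List.length) j h5
          simp only [hbdef, h6]
          have h7 : (Ls.map List.length)[j] = (Ls.get ⟨j, hj⟩).length := by simp
          omega
        have hbmono : ∀ j j', j ≤ j' → b j ≤ b j' := by
          intro j j' h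
          simp only [hbdef]
          exact Nat.add_le_add_left (sum_take_mono h) t
        have hbstrict : ∀ j (hj : j < Ls.length), b j < b (j+1) := by
          intro j hj
          rw [hbsucc j hj]
          have hl := List.length_pos_iff.mpr (hne ⟨j, hj⟩)
          omega
        have hpiece : ∀ j (hj : j < Ls.length),
            Ls.get ⟨j, hj⟩ = (List.range (b (j+1) - b j)).map (fun i => f (b j + i)) := by
          intro j hj
          have hsplit : (List.range (m+1)).map f =
              ((List.range t).map f ++ (Ls.take j).flatten) ++
                (Ls.get ⟨j, hj⟩ ++ (Ls.drop (j+1)).flatten) := by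
            have e1 : Ls = Ls.take j ++ Ls[j] :: Ls.drop (j+1) := by
              rw [← List.drop_eq_getElem_cons hj, List.take_append_drop]
            rw [hL]
            conv_lhs => rw [e1]
            rw [List.flatten_append, List.flatten_cons]
            simp [List.append_assoc, List.get_eq_getElem]
          have hlen1 : ((List.range t).map f ++ (Ls.take j).flatten).length = b j := by
            simp [List.length_flatten, hbdef, List.map_take]
          have hdrop : ((List.range (m+1)).map f).drop (b j) =
              Ls.get ⟨j, hj⟩ ++ (Ls.drop (j+1)).flatten := by
            rw [hsplit, List.drop_left' hlen1]
          have htake : (((List.range (m+1)).map f).drop (b j)).take (Ls.get ⟨j, hj⟩).length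
              = Ls.get ⟨j, hj⟩ := by
            rw [hdrop, List.take_left]
          have hlen2 : (Ls.get ⟨j, hj⟩).length = b (j+1) - b j := by
            rw [hbsucc j hj]; omega
          rw [← htake, hlen2]
          apply drop_take_map_range
          have h4 : b (j+1) ≤ b Ls.length := hbmono _ _ (by omega)
          have h5 : b j ≤ b (j+1) := hbmono _ _ (by omega)
          omega
        have hmem : ∀ n' j (hj : j < Ls.length), b j ≤ n' → n' < b (j+1) →
            f n' ∈ Ls.get ⟨j, hj⟩ := by
          intro n' j hj h1 h2
          rw [hpiece j hj]
          exact List.mem_map.mpr ⟨n' - b j, List.mem_range.mpr (by omega), by congr 1; omega⟩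
        have hitv : ∀ n', t ≤ n' → n' ≤ m → ∃ j, j < Ls.length ∧ b j ≤ n' ∧ n' < b (j+1) := by
          intro n' h1 h2
          have hP0 : b 0 ≤ n' := by rw [hb0]; exact h1
          have hj1 : b (Nat.findGreatest (fun j => b j ≤ n') Ls.length) ≤ n' :=
            Nat.findGreatest_spec (P := fun j => b j ≤ n') (Nat.zero_le Ls.length) hP0
          have hjp : Nat.findGreatest (fun j => b j ≤ n') Ls.length ≤ Ls.length :=
            Nat.findGreatest_le Ls.length
          have hjlt : Nat.findGreatest (fun j => b j ≤ n') Ls.length < Ls.length := by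
            rcases Nat.lt_or_ge (Nat.findGreatest (fun j => b j ≤ n') Ls.length) Ls.length with h | h
            · exact h
            · exfalso
              have he : Nat.findGreatest (fun j => b j ≤ n') Ls.length = Ls.length := by omega
              rw [he, hbp] at hj1
              omega
          refine ⟨Nat.findGreatest (fun j => b j ≤ n') Ls.length, hjlt, hj1, ?_⟩
          by_contra hcon
          push_neg at hcon
          exact Nat.findGreatest_is_greatest (P := fun j => b j ≤ n') (n := Ls.length)
            (by omega) (by omega) hcon
        have hprednj : ∀ n' j (hj : j < Ls.length), b j ≤ n' → n' < b (j+1) →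
            DExpansion U ((List.range t).map f) j d ((Ls.get ⟨j, hj⟩).headI) ∧
              (Ls.get ⟨j, hj⟩).headI <+: f n' := by
          intro n' j hj h1 h2
          refine ⟨hexp ⟨j, hj⟩, ?_⟩
          obtain ⟨w, hwE, -⟩ := dvisit_mem (hpv ⟨j, hj⟩) (f n') (hmem n' j hj h1 h2)
          exact ⟨w, hwE.symm⟩
        obtain ⟨j, hjp, hj1, hj2⟩ := hitv n hnt hnm
        obtain ⟨hexpj, hprej⟩ := hprednj n j hjp hj1 hj2
        refine ⟨j, (Ls.get ⟨j, hjp⟩).headI, hexpj, hprej, ?_, ?_⟩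
        · intro n' j' ν' h1 h2 h3 hde hpre
          obtain ⟨j₂, hj₂p, hj₂1, hj₂2⟩ := hitv n' h1 h2
          obtain ⟨hexpj₂, hprej₂⟩ := hprednj n' j₂ hj₂p hj₂1 hj₂2
          have he := (PUNIQ (f n') j' ν' j₂ _ hde hpre hexpj₂ hprej₂).1
          have hle : j ≤ j₂ := by
            by_contra hcon
            push_neg at hcon
            have := hbmono (j₂+1) j hcon
            omega
          omega
        · intro hmax hmin
          have hbjn : b j = n := by
            have h1 : t ≤ b j := by
              have := hbmono 0 j (Nat.zero_le _)
              omega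
            rcases Nat.lt_or_ge (b j) n with hlt | hge
            · exfalso
              have hq2 := hprednj (b j) j hjp le_rfl (hbstrict j hjp)
              exact absurd (hmin (b j) h1 hlt j _ hq2.1 hq2.2) (lt_irrefl j)
            · omega
          have hbj1 : b (j+1) = m + 1 := by
            obtain ⟨j₃, hj₃p, hj₃1, hj₃2⟩ := hitv m (by omega) le_rfl
            obtain ⟨hexpj₃, hprej₃⟩ := hprednj m j₃ hj₃p hj₃1 hj₃2
            have hle : j₃ ≤ j := hmax m (by omega) le_rfl j₃ _ hexpj₃ hprej₃
            have h4 : b (j+1) ≤ b Ls.length := hbmono (j+1) Ls.length (by omega)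
            have h5 : b (j₃+1) ≤ b (j+1) := hbmono _ _ (by omega)
            omega
          have hpieceeq : Ls.get ⟨j, hjp⟩ =
              (List.range (m + 1 - n)).map (fun i => f (n + i)) := by
            rw [hpiece j hjp, hbjn, hbj1]
          have hhead : (Ls.get ⟨j, hjp⟩).headI = f n := by
            rw [hpieceeq, headI_map_range _ _ (by omega)]
            simp
          constructor
          · exact hhead
          · have hv := hpv ⟨j, hjp⟩
            rw [hhead] at hv
            rw [hpieceeq] at hv
            exact hv
      have exP : ∀ n : ℕ, ∃ jv : ℕ × List ℕ, t ≤ n →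
          DExpansion U ((List.range t).map f) jv.1 d jv.2 ∧ jv.2 <+: f n := by
        intro n
        by_cases h : t ≤ n
        · obtain ⟨j, ν, h1, h2, -, -⟩ := BLOCK n h n h le_rfl
          exact ⟨(j, ν), fun _ => ⟨h1, h2⟩⟩
        · exact ⟨(0, []), fun hc => absurd hc h⟩
      choose w hw using exP
      have gmono : ∀ n n', t ≤ n → n ≤ n' → (w n).1 ≤ (w n').1 := by
        intro n n' h1 h2
        obtain ⟨j, ν, hd1, hp1, hmon, -⟩ := BLOCK n' (by omega) n h1 h2
        have e1 : j = (w n).1 := (PUNIQ (f n) j ν _ _ hd1 hp1 (hw n h1).1 (hw n h1).2).1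
        have e2 : j ≤ (w n').1 := hmon n' (w n').1 (w n').2 (by omega) le_rfl h2
          (hw n' (by omega)).1 (hw n' (by omega)).2
        omega
      have gbound : ∀ n, t ≤ n → (w n).1 ≤ t := by
        intro n h
        have := dexp_ncard_le (hw n h).1
        simpa using this
      have hstab : ∃ N, t ≤ N ∧ ∀ n, N ≤ n → (w n).1 = (w N).1 := by
        have h1 := Nat.findGreatest_spec (P := fun v => ∃ n, t ≤ n ∧ (w n).1 = v)
          (m := (w t).1) (n := t) (gbound t le_rfl) ⟨t, le_rfl, rfl⟩
        obtain ⟨N, hNt, hNv⟩ := h1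
        refine ⟨N, hNt, ?_⟩
        intro n hn
        have h2 : (w n).1 ≤ Nat.findGreatest (fun v => ∃ n, t ≤ n ∧ (w n).1 = v) t :=
          Nat.le_findGreatest (gbound n (le_trans hNt hn)) ⟨n, le_trans hNt hn, rfl⟩
        have h3 : (w N).1 ≤ (w n).1 := gmono N n hNt hn
        omega
      obtain ⟨N, hNt, hNstab⟩ := hstab
      have Hex : ∃ n, t ≤ n ∧ (w n).1 = (w N).1 := ⟨N, hNt, rfl⟩
      obtain ⟨hnstart, hnstarg⟩ := Nat.find_spec Hex
      have hstar : ∀ n, Nat.find Hex ≤ n → (w n).1 = (w N).1 := by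
        intro n hn
        rcases le_total N n with h | h
        · exact hNstab n h
        · have h1 := gmono (Nat.find Hex) n hnstart hn
          have h2 := gmono n N (le_trans hnstart hn) h
          omega
      have ht1 : 1 ≤ t := by
        have hne2 := dvisit_ne_nil hMfix
        rcases Nat.eq_zero_or_pos t with h | h
        · rw [h] at hne2; simp at hne2
        · exact h
      have SUFF : ∀ m', DVisit U (D ++ [d]) (f (Nat.find Hex))
          ((List.range (m' + 1)).map (fun i => f (Nat.find Hex + i))) ∧
          DExpansion U ((List.range t).map f) ((w N).1) d (f (Nat.find Hex)) := by
        intro m'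
        obtain ⟨j, ν, hd1, hp1, hmon, hsuf⟩ :=
          BLOCK (Nat.find Hex + m') (by omega) (Nat.find Hex) hnstart (by omega)
        have e1 : j = (w (Nat.find Hex)).1 := (PUNIQ (f (Nat.find Hex)) j ν _ _ hd1 hp1
          (hw (Nat.find Hex) hnstart).1 (hw (Nat.find Hex) hnstart).2).1
        have e2 : j = (w N).1 := by rw [e1, hnstarg]
        have hmax : ∀ n', Nat.find Hex ≤ n' → n' ≤ Nat.find Hex + m' → ∀ j' ν',
            DExpansion U ((List.range t).map f) j' d ν' → ν' <+: f n' → j' ≤ j := by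
          intro n' hn'1 hn'2 j' ν' hde hpre
          have ht' : t ≤ n' := le_trans hnstart hn'1
          have he := (PUNIQ (f n') j' ν' _ _ hde hpre (hw n' ht').1 (hw n' ht').2).1
          have he2 := hstar n' hn'1
          omega
        have hmin : ∀ n', t ≤ n' → n' < Nat.find Hex → ∀ j' ν',
            DExpansion U ((List.range t).map f) j' d ν' → ν' <+: f n' → j' < j := by
          intro n' h1 h2 j' ν' hde hpre
          have he := (PUNIQ (f n') j' ν' _ _ hde hpre (hw n' h1).1 (hw n' h1).2).1
          have h3 : (w n').1 ≤ (w (Nat.find Hex)).1 := gmono n' (Nat.find Hex) h1 (by omega)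
          have h4 : (w n').1 ≠ (w N).1 := by
            intro hc
            have := Nat.find_min' Hex ⟨h1, hc⟩
            omega
          omega
        obtain ⟨hνeq, hvis⟩ := hsuf hmax hmin
        constructor
        · have harith : Nat.find Hex + m' + 1 - Nat.find Hex = m' + 1 := by omega
          rwa [harith] at hvis
        · rw [hνeq, e2] at hd1
          exact hd1
      have STABLE : Stable f (f (Nat.find Hex)) := by
        refine ⟨Nat.find Hex, rfl, ?_⟩
        intro n hn
        have ht' : t ≤ n := by omega
        have h1 := hw n ht'
        have h2 : (w n).1 = (w N).1 := hstar n (by omega)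
        have h1' : DExpansion U ((List.range t).map f) ((w N).1) d (w n).2 := by
          rw [← h2]; exact h1.1
        have h3 : (w n).2 = f (Nat.find Hex) := dexp_eq_of_eq h1' (SUFF 0).2
        constructor
        · rw [← h3]; exact h1.2
        · intro he
          exact absurd (hinj he) (by omega)
      rcases Nat.lt_or_ge q (Nat.find Hex) with hq | hq
      · exact ⟨Nat.find Hex, hq, STABLE⟩
      · have hqpos : q - Nat.find Hex < q := by omega
        have henum' : Enumerates U (D ++ [d]) (f (Nat.find Hex))
            (fun i => f (Nat.find Hex + i)) := fun m' => (SUFF m').1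
        obtain ⟨i, hi1, mi, hmi, hall⟩ := IHq (q - Nat.find Hex) hqpos (D ++ [d])
          (f (Nat.find Hex)) (fun i => f (Nat.find Hex + i)) hDd henum'
        refine ⟨Nat.find Hex + i, by omega, Nat.find Hex + mi, hmi, ?_⟩
        intro n hn
        have h5 := hall (n - Nat.find Hex) (by omega)
        have h6 : Nat.find Hex + (n - Nat.find Hex) = n := by omega
        simp only [h6] at h5
        exact h5

/-- after every stable node of the complete D-visit there is another
stable node; consequently there are infinitely many stable nodes. -/
theorem stable_unbounded (k : ℕ) (U : Set (List ℕ)) (hU : IsKTree k U)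
    (D : List ℕ) (hDnd : D.Nodup) (hDk : ∀ d ∈ D, d < k)
    (lam : List ℕ) (hlam : lam ∈ U)
    (hinf : (subtreeD U D lam).Infinite)
    (f : ℕ → List ℕ) (hf : Enumerates U D lam f) :
    (∀ m : ℕ, Stable f (f m) → ∃ n, m < n ∧ Stable f (f n)) ∧
      (∀ q : ℕ, ∃ n, q < n ∧ Stable f (f n)) := by
  constructor
  · intro m _
    exact stable_aux U m D lam f hDnd hf
  · intro q
    exact stable_aux U q D lam f hDnd hf
end

section
/- Let U_D(λ) be infinite, f the enumeration of the complete D-visit from λ, and i < h. If infinitely many nodes in the range of f are d_i-children of other nodes in the range of f, then infinitely many stable nodes in the range of f are d_i-children of other nodes in the range of f. -/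
namespace StableChildrenAux
open List

variable {U : Set (List ℕ)}

/-- Every element of a visit is in `U` and extends the root by colors of `C`. -/
lemma visit_elems {C lam : List ℕ} {L : List (List ℕ)} (h : DVisit U C lam L) :
    ∀ ν ∈ L, ν ∈ U ∧ ∃ η, ν = lam ++ η ∧ ∀ x ∈ η, x ∈ C := by
  induction h with
  | base lam hU =>
    intro ν hν
    have : ν = lam := by simpa using hν
    subst this
    exact ⟨hU, [], by simp⟩
  | step d D lam M Ls hM hc hne hexp hvis hc2 ihM ihLs =>
    intro ν hν
    rcases List.mem_append.mp hν with hν | hν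
    · obtain ⟨hU, η, rfl, hcol⟩ := ihM ν hν
      exact ⟨hU, η, rfl, fun x hx => List.mem_cons_of_mem d (hcol x hx)⟩
    · rw [List.mem_flatten] at hν
      obtain ⟨Bk, hBk, hν⟩ := hν
      obtain ⟨j, hj⟩ := List.mem_iff_get.mp hBk
      obtain ⟨hU, η, hνeq, hcol⟩ := ihLs j ν (by rw [hj]; exact hν)
      obtain ⟨hUh, μ, hμM, hhead, _⟩ := hexp j
      obtain ⟨_, η', hμeq, hcol'⟩ := ihM μ hμM
      refine ⟨hU, η' ++ [d] ++ η, by rw [hνeq, hhead, hμeq]; simp, ?_⟩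
      intro x hx
      rcases List.mem_append.mp hx with hx | hx
      · rcases List.mem_append.mp hx with hx | hx
        · exact List.mem_cons_of_mem _ (hcol' x hx)
        · simp only [List.mem_singleton] at hx; subst hx; exact List.mem_cons_self
      · rcases List.mem_append.mp (hcol x hx) with h' | h'
        · exact List.mem_cons_of_mem _ h'
        · simp only [List.mem_singleton] at h'; subst h'; exact List.mem_cons_self

/-- A visit starts with the root and all other elements properly extend the root. -/
lemma visit_shape {C lam : List ℕ} {L : List (List ℕ)} (h : DVisit U C lam L) :
    ∃ L', L = lam :: L' ∧ ∀ ν ∈ L', lam <+: ν ∧ lam.length < ν.length := by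
  induction h with
  | base lam hU => exact ⟨[], rfl, by simp⟩
  | step d D lam M Ls hM hc hne hexp hvis hc2 ihM ihLs =>
    obtain ⟨M', hMeq, hM'⟩ := ihM
    refine ⟨M' ++ Ls.flatten, by rw [hMeq]; simp, ?_⟩
    intro ν hν
    rcases List.mem_append.mp hν with hν | hν
    · exact hM' ν hν
    · rw [List.mem_flatten] at hν
      obtain ⟨Bk, hBk, hν⟩ := hν
      obtain ⟨j, hj⟩ := List.mem_iff_get.mp hBk
      obtain ⟨hUh, μ, hμM, hhead, _⟩ := hexp j
      have hlamμ : lam <+: μ ∧ lam.length ≤ μ.length := by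
        rw [hMeq] at hμM
        rcases List.mem_cons.mp hμM with rfl | hμM
        · exact ⟨List.prefix_refl _, le_refl _⟩
        · exact ⟨(hM' μ hμM).1, le_of_lt (hM' μ hμM).2⟩
      have hlamh : lam <+: (Ls.get j).headI ∧ lam.length < ((Ls.get j).headI).length := by
        rw [hhead]
        constructor
        · exact hlamμ.1.trans (List.prefix_append _ _)
        · simp only [List.length_append, List.length_singleton]
          omega
      obtain ⟨T, hTeq, hT⟩ := ihLs j
      have hν' : ν ∈ (Ls.get j) := by rw [hj]; exact hν
      rw [hTeq] at hν'
      rcases List.mem_cons.mp hν' with rfl | hν'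
      · exact hlamh
      · obtain ⟨h1, h2⟩ := hT ν hν'
        exact ⟨hlamh.1.trans h1, lt_trans hlamh.2 h2⟩

end StableChildrenAux
namespace StableChildrenAux

lemma block_prefix {C lam : List ℕ} {L : List (List ℕ)} (h : DVisit U C lam L) :
    ∀ ν ∈ L, lam <+: ν ∧ lam.length ≤ ν.length := by
  obtain ⟨L', rfl, hL'⟩ := visit_shape h
  intro ν hν
  rcases List.mem_cons.mp hν with rfl | hν
  · exact ⟨List.prefix_refl _, le_refl _⟩
  · exact ⟨(hL' ν hν).1, le_of_lt (hL' ν hν).2⟩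

lemma prefix_of_prefix_concat {x μ : List ℕ} {c : ℕ} (h : x <+: μ ++ [c])
    (hlen : x.length ≤ μ.length) : x <+: μ := by
  rw [List.prefix_iff_eq_take] at h
  rw [List.take_append_of_le_length hlen] at h
  rw [h]
  exact List.take_prefix _ _

lemma not_prefix_child {c : ℕ} {Cs lam : List ℕ} {M : List (List ℕ)} (hc : c ∉ Cs)
    (hM : DVisit U Cs lam M) {μ₀ μ : List ℕ} (h0 : μ₀ ∈ M) (h1 : μ ∈ M) :
    ¬ (μ₀ ++ [c] <+: μ) := by
  intro hp
  obtain ⟨-, η₀, rfl, -⟩ := visit_elems hM μ₀ h0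
  obtain ⟨-, η, rfl, hcol⟩ := visit_elems hM μ h1
  rw [List.append_assoc] at hp
  have h2 : η₀ ++ [c] <+: η := (List.prefix_append_right_inj lam).mp hp
  exact hc (hcol c (h2.subset (by simp)))

lemma not_last_c {c : ℕ} {Cs lam : List ℕ} {M : List (List ℕ)} (hc : c ∉ Cs)
    (hM : DVisit U Cs lam M) {ν : List ℕ} (hν : ν ∈ M) (hne : ν ≠ lam) :
    ν.getLast? ≠ some c := by
  intro hlast
  obtain ⟨-, η, rfl, hcol⟩ := visit_elems hM ν hν
  have hηne : η ≠ [] := by rintro rfl; simp at hne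
  rw [List.getLast?_append, List.getLast?_eq_getLast hηne] at hlast
  simp only [Option.some_or, Option.some.injEq] at hlast
  subst hlast
  exact hc (hcol _ (List.getLast_mem hηne))

lemma visit_nodup {C lam : List ℕ} {L : List (List ℕ)} (h : DVisit U C lam L) :
    C.Nodup → L.Nodup := by
  induction h with
  | base lam hU => intro _; simp
  | step d D lam M Ls hM hcomp hne hexp hvis hcomp2 ihM ihLs =>
    intro hC
    have hd : d ∉ D := (List.nodup_cons.mp hC).1
    have hD : D.Nodup := (List.nodup_cons.mp hC).2
    have hD' : (D ++ [d]).Nodup := (List.perm_append_singleton d D).symm.nodup hC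
    refine List.Nodup.append (ihM hD) ?_ ?_
    · rw [List.nodup_flatten]
      constructor
      · intro Bk hBk
        obtain ⟨j, hj⟩ := List.mem_iff_get.mp hBk
        rw [← hj]; exact ihLs j hD'
      · rw [List.pairwise_iff_get]
        intro i j hij ν hνi hνj
        obtain ⟨-, μi, hμi, hheadi, hcardi⟩ := hexp i
        obtain ⟨-, μj, hμj, hheadj, hcardj⟩ := hexp j
        have hpi : (Ls.get i).headI <+: ν := (block_prefix (hvis i) ν hνi).1
        have hpj : (Ls.get j).headI <+: ν := (block_prefix (hvis j) ν hνj).1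
        have habs : ∀ (a b : Fin Ls.length), a.1 ≠ b.1 →
            (Ls.get a).headI <+: (Ls.get b).headI → False := by
          intro a b hab hpre
          obtain ⟨-, μa, hμa, hheada, hcarda⟩ := hexp a
          obtain ⟨-, μb, hμb, hheadb, hcardb⟩ := hexp b
          rcases eq_or_ne ((Ls.get a).headI) ((Ls.get b).headI) with heq | hne'
          · rw [hheada, hheadb] at heq
            have : μa = μb := by
              have := List.append_inj heq (by
                have : μa.length + 1 = μb.length + 1 := by
                  have := congrArg List.length heq; simpa using this
                omega)
              exact this.1
            rw [this] at hcarda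
            exact hab (hcarda ▸ hcardb ▸ rfl)
          · have hlt : ((Ls.get a).headI).length < ((Ls.get b).headI).length := by
              have hle := hpre.length_le
              rcases lt_or_eq_of_le hle with h' | h'
              · exact h'
              · exact absurd (hpre.eq_of_length h') hne'
            have hlen : ((Ls.get a).headI).length ≤ μb.length := by
              rw [hheadb] at hlt; simp only [List.length_append, List.length_singleton] at hlt; omega
            have : μa ++ [d] <+: μb := by
              rw [← hheada]
              exact prefix_of_prefix_concat (by rw [← hheadb]; exact hpre) (by rw [hheada] at hlen ⊢; exact hlen)
            exact not_prefix_child hd hM hμa hμb this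
        rcases List.prefix_or_prefix_of_prefix hpi hpj with hp | hp
        · exact habs i j (fun e => absurd (Fin.ext e) (ne_of_lt hij)) hp
        · exact habs j i (fun e => absurd (Fin.ext e) (ne_of_gt hij)) hp
    · intro ν hνM hνF
      rw [List.mem_flatten] at hνF
      obtain ⟨Bk, hBk, hν⟩ := hνF
      obtain ⟨j, hj⟩ := List.mem_iff_get.mp hBk
      obtain ⟨-, μj, hμj, hheadj, -⟩ := hexp j
      have hpj : (Ls.get j).headI <+: ν := (block_prefix (hvis j) ν (by rw [hj]; exact hν)).1
      rw [hheadj] at hpj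
      exact not_prefix_child hd hM hμj hνM hpj

end StableChildrenAux
namespace StableChildrenAux

/-- Decomposition data of a prefix of the enumeration. -/
def IsDecomp (U : Set (List ℕ)) (g : ℕ → List ℕ) (c : ℕ) (Cs lam : List ℕ) (m : ℕ)
    (M : List (List ℕ)) (Ls : List (List (List ℕ))) : Prop :=
  (List.range (m + 1)).map g = M ++ Ls.flatten ∧ DVisit U Cs lam M ∧
    (∀ j : Fin Ls.length, Ls.get j ≠ []) ∧
    (∀ j : Fin Ls.length, ∃ μ ∈ M, (Ls.get j).headI = μ ++ [c]) ∧
    (∀ j : Fin Ls.length, DVisit U (Cs ++ [c]) ((Ls.get j).headI) (Ls.get j))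

lemma exists_decomp {g : ℕ → List ℕ} {c : ℕ} {Cs lam : List ℕ}
    (hg : Enumerates U (c :: Cs) lam g) (m : ℕ) :
    ∃ M Ls, IsDecomp U g c Cs lam m M Ls := by
  have h := hg m
  generalize hL : (List.range (m + 1)).map g = L at h
  cases h with
  | step d D lam M Ls hM hcomp hne hexp hvis hcomp2 =>
    refine ⟨M, Ls, ?_, hM, hne, ?_, hvis⟩
    · exact hL
    · intro j
      obtain ⟨-, μ, hμ, hh, -⟩ := hexp j
      exact ⟨μ, hμ, hh⟩

lemma F_get (g : ℕ → List ℕ) {n N : ℕ} (h : n < N) :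
    ((List.range N).map g)[n]? = some (g n) := by
  rw [List.getElem?_map, List.getElem?_range h, Option.map_some]

lemma g_mem_F (g : ℕ → List ℕ) {n N : ℕ} (h : n < N) : g n ∈ (List.range N).map g :=
  List.mem_map.mpr ⟨n, List.mem_range.mpr h, rfl⟩

lemma enum_proper {C lam : List ℕ} {g : ℕ → List ℕ} (hg : Enumerates U C lam g)
    {n : ℕ} (h : 1 ≤ n) : lam <+: g n ∧ lam.length < (g n).length := by
  obtain ⟨L', hL, hP⟩ := visit_shape (hg n)
  have h1 := F_get g (show n < n + 1 by omega)
  rw [hL] at h1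
  obtain ⟨n', rfl⟩ : ∃ n', n = n' + 1 := ⟨n - 1, by omega⟩
  rw [List.getElem?_cons_succ] at h1
  obtain ⟨hlt, he⟩ := List.getElem?_eq_some_iff.mp h1
  exact hP _ (he ▸ List.getElem_mem hlt)

lemma enum_inj {C lam : List ℕ} {g : ℕ → List ℕ} (hC : C.Nodup)
    (hg : Enumerates U C lam g) : Function.Injective g := by
  intro n n' hnn
  have hnd := visit_nodup (hg (max n n')) hC
  exact List.inj_on_of_nodup_map hnd (List.mem_range.mpr (by omega))
    (List.mem_range.mpr (by omega)) hnn

lemma decomp_M_pos {g : ℕ → List ℕ} {c : ℕ} {Cs lam : List ℕ} {m : ℕ} {M Ls}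
    (hd : IsDecomp U g c Cs lam m M Ls) : 1 ≤ M.length := by
  obtain ⟨M', hM'eq, -⟩ := visit_shape hd.2.1
  rw [hM'eq]; simp

lemma decomp_len {g : ℕ → List ℕ} {c : ℕ} {Cs lam : List ℕ} {m : ℕ} {M Ls}
    (hd : IsDecomp U g c Cs lam m M Ls) : M.length + Ls.flatten.length = m + 1 := by
  have := congrArg List.length hd.1
  simpa using this.symm

lemma decomp_head0 {g : ℕ → List ℕ} {c : ℕ} {Cs lam : List ℕ} {m : ℕ} {M Ls}
    (hd : IsDecomp U g c Cs lam m M Ls) (hLs : Ls ≠ []) :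
    M.length ≤ m ∧ ∃ μ ∈ M, g M.length = μ ++ [c] := by
  obtain ⟨heq, hM, hne, hexp, hvis⟩ := hd
  obtain ⟨Bk, Ls', rfl⟩ := List.exists_cons_of_ne_nil hLs
  have hBk : Bk ≠ [] := hne ⟨0, by simp⟩
  obtain ⟨x, tl, rfl⟩ := List.exists_cons_of_ne_nil hBk
  obtain ⟨μ, hμ, hhead⟩ := hexp ⟨0, by simp⟩
  have hflat : ((x :: tl) :: Ls').flatten = x :: (tl ++ Ls'.flatten) := by simp
  have hlen : m + 1 = M.length + (x :: tl ++ Ls'.flatten).length := by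
    have := congrArg List.length heq
    simpa using this
  simp only [List.length_cons, List.length_append] at hlen
  have hMle : M.length ≤ m := by omega
  have h1 := F_get g (show M.length < m + 1 by omega)
  rw [heq, hflat] at h1
  rw [List.getElem?_append_right (le_refl M.length)] at h1
  simp only [Nat.sub_self, List.cons_append, List.getElem?_cons_zero,
    Option.some.injEq] at h1
  refine ⟨hMle, μ, hμ, ?_⟩
  rw [← h1]
  simpa using hhead

lemma decomp_not_lt {g : ℕ → List ℕ} {c : ℕ} {Cs lam : List ℕ}
    (hnd : (c :: Cs).Nodup) (hg : Enumerates U (c :: Cs) lam g)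
    {m m' : ℕ} {M Ls M' Ls'} (hd : IsDecomp U g c Cs lam m M Ls)
    (hd' : IsDecomp U g c Cs lam m' M' Ls')
    (hLs : Ls ≠ []) (hlt : M.length < M'.length) : False := by
  have hc : c ∉ Cs := (List.nodup_cons.mp hnd).1
  obtain ⟨hMle, μ, hμ, hgc⟩ := decomp_head0 hd hLs
  have hlen' := decomp_len hd'
  have hmem : g M.length ∈ M' := by
    have h1 := F_get g (show M.length < m' + 1 by omega)
    rw [hd'.1, List.getElem?_append, if_pos hlt] at h1
    obtain ⟨h2, h3⟩ := List.getElem?_eq_some_iff.mp h1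
    exact h3 ▸ List.getElem_mem h2
  have h1M := decomp_M_pos hd
  have hne : g M.length ≠ lam := by
    intro h
    have := (enum_proper hg h1M).2
    rw [h] at this; omega
  exact not_last_c hc hd'.2.1 hmem hne (by rw [hgc]; exact List.getLast?_concat)

lemma decomp_M_canon {g : ℕ → List ℕ} {c : ℕ} {Cs lam : List ℕ} {m : ℕ} {M Ls}
    (hd : IsDecomp U g c Cs lam m M Ls) : M = (List.range M.length).map g := by
  have hlen := decomp_len hd
  apply List.ext_getElem?
  intro n
  by_cases hn : n < M.length
  · have h1 := F_get g (show n < m + 1 by omega)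
    rw [hd.1, List.getElem?_append, if_pos hn] at h1
    rw [h1, F_get g hn]
  · rw [List.getElem?_eq_none (by omega), List.getElem?_eq_none (by simpa using hn)]

lemma blocks_nonempty {g : ℕ → List ℕ} {c : ℕ} {Cs lam : List ℕ}
    (hnd : (c :: Cs).Nodup) (hg : Enumerates U (c :: Cs) lam g)
    {w m : ℕ} (hw1 : 1 ≤ w) (hwm : w ≤ m) (hwc : (g w).getLast? = some c)
    {M Ls} (hd : IsDecomp U g c Cs lam m M Ls) : Ls ≠ [] := by
  rintro rfl
  obtain ⟨heq, hM, -, -, -⟩ := hd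
  rw [List.flatten_nil, List.append_nil] at heq
  have hmem : g w ∈ M := by rw [← heq]; exact g_mem_F g (by omega)
  have hne : g w ≠ lam := by
    intro h
    have := (enum_proper hg hw1).2
    rw [h] at this; omega
  exact not_last_c (List.nodup_cons.mp hnd).1 hM hmem hne hwc

lemma shrink {g : ℕ → List ℕ} {c : ℕ} {Cs lam : List ℕ}
    (hnd : (c :: Cs).Nodup) (hg : Enumerates U (c :: Cs) lam g)
    (hno : ∀ n, 1 ≤ n → (g n).getLast? ≠ some c) : Enumerates U Cs lam g := by
  intro m
  obtain ⟨M, Ls, hd⟩ := exists_decomp hg m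
  rcases eq_or_ne Ls [] with rfl | hLs
  · obtain ⟨heq, hM, -, -, -⟩ := hd
    rw [List.flatten_nil, List.append_nil] at heq
    rw [heq]; exact hM
  · obtain ⟨hMle, μ, hμ, hgc⟩ := decomp_head0 hd hLs
    exact absurd (by rw [hgc]; exact List.getLast?_concat) (hno _ (decomp_M_pos hd))

end StableChildrenAux
namespace StableChildrenAux

/-- First element of a nonempty flatten-chunk of the enumeration. -/
lemma flatten_head {g : ℕ → List ℕ} {Bk : List (List ℕ)} {rest : List (List (List ℕ))}
    (hBk : Bk ≠ []) {s K : ℕ} (heq : (Bk :: rest).flatten = (List.range' s K).map g) :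
    g s = Bk.headI := by
  obtain ⟨x, tl, rfl⟩ := List.exists_cons_of_ne_nil hBk
  have hK : 1 ≤ K := by
    have := congrArg List.length heq
    simp at this
    omega
  rw [show K = (K - 1) + 1 by omega, List.range'_succ] at heq
  simp only [List.flatten_cons, List.cons_append, List.map_cons] at heq
  have := (List.cons.injEq _ _ _ _).mp heq
  rw [this.1]
  simp

lemma seg {c : ℕ} {Cs lam : List ℕ} {M : List (List ℕ)} (hc : c ∉ Cs)
    (hM : DVisit U Cs lam M) {g : ℕ → List ℕ} {p : ℕ}
    (hp : ∃ μ ∈ M, g p = μ ++ [c])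
    (hmax : ∀ n, p < n → ∀ μ ∈ M, g n ≠ μ ++ [c]) :
    ∀ (Ls : List (List (List ℕ))) (s K : ℕ),
      (∀ j : Fin Ls.length, Ls.get j ≠ []) →
      (∀ j : Fin Ls.length, ∃ μ ∈ M, (Ls.get j).headI = μ ++ [c]) →
      (∀ j : Fin Ls.length, DVisit U (Cs ++ [c]) ((Ls.get j).headI) (Ls.get j)) →
      Ls.flatten = (List.range' s K).map g →
      s ≤ p → p < s + K →
      DVisit U (Cs ++ [c]) (g p) ((List.range' p (s + K - p)).map g) := by
  intro Ls
  induction Ls with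
  | nil =>
    intro s K hne hexp hvis heq hsp hpK
    have hK : K = 0 := by
      have := congrArg List.length heq
      simpa using this.symm
    omega
  | cons Bk Ls' ih =>
    intro s K hne hexp hvis heq hsp hpK
    have hBk : Bk ≠ [] := hne ⟨0, by simp⟩
    obtain ⟨b, hb⟩ : ∃ b, Bk.length = b := ⟨_, rfl⟩
    have hb1 : 1 ≤ b := hb ▸ List.length_pos_iff.mpr hBk
    have hgs : g s = Bk.headI := flatten_head hBk heq
    have hKb : b ≤ K := by
      have h := congrArg List.length heq
      simp only [List.flatten_cons, List.length_append, List.length_map,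
        List.length_range', hb] at h
      omega
    have hr : List.range' s K = List.range' s b ++ List.range' (s + b) (K - b) := by
      have h2 := List.range'_append (s := s) (m := b) (n := K - b) (step := 1)
      simp only [one_mul] at h2
      rw [show b + (K - b) = K by omega] at h2
      exact h2.symm
    have hsplit := List.append_inj
      (by rw [← List.flatten_cons, heq, hr, List.map_append] :
        Bk ++ Ls'.flatten = (List.range' s b).map g ++ (List.range' (s + b) (K - b)).map g)
      (by simp [hb])
    obtain ⟨hBkeq, hflat'⟩ := hsplit
    by_cases hcase : p < s + b
    · obtain ⟨μ₀, hμ₀, hhead0⟩ := hexp ⟨0, by simp⟩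
      simp only [List.get_eq_getElem, List.getElem_cons_zero] at hhead0
      rcases eq_or_lt_of_le hsp with rfl | hslt
      · -- p = s (substituted) : the first block is the last one
        have hLs' : Ls' = [] := by
          by_contra hne'
          obtain ⟨Bk2, Ls'', rfl⟩ := List.exists_cons_of_ne_nil hne'
          have hBk2 : Bk2 ≠ [] := by
            have := hne ⟨1, by simp⟩
            simpa using this
          obtain ⟨μ2, hμ2, hhead2⟩ := hexp ⟨1, by simp⟩
          simp only [List.get_eq_getElem, List.getElem_cons_succ,
            List.getElem_cons_zero] at hhead2
          have hgs2 : g (s + b) = Bk2.headI := flatten_head hBk2 hflat'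
          exact hmax (s + b) (by omega) μ2 hμ2 (by rw [hgs2, hhead2])
        subst hLs'
        have hK0 : K - b = 0 := by
          have h := congrArg List.length hflat'
          simp at h
          omega
        rw [show s + K - s = K by omega, show K = b by omega, ← hBkeq, hgs]
        have := hvis ⟨0, by simp⟩
        simpa using this
      · -- s < p : impossible, g p would be an internal node ending in c
        exfalso
        obtain ⟨μ, hμ, hgp⟩ := hp
        obtain ⟨T, hTeq, hT⟩ := visit_shape (by simpa using hvis ⟨0, by simp⟩ :
          DVisit U (Cs ++ [c]) Bk.headI Bk)
        have hrs : List.range' s b = s :: List.range' (s + 1) (b - 1) := by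
          conv_lhs => rw [show b = (b - 1) + 1 by omega]
          rw [List.range'_succ]
        have h2 : Bk.headI :: T = g s :: (List.range' (s + 1) (b - 1)).map g := by
          rw [← hTeq, hBkeq, hrs, List.map_cons]
        have hTmap : T = (List.range' (s + 1) (b - 1)).map g :=
          ((List.cons.injEq _ _ _ _).mp h2).2
        have hmem : g p ∈ T := by
          rw [hTmap]
          exact List.mem_map.mpr ⟨p, List.mem_range'_1.mpr ⟨by omega, by omega⟩, rfl⟩
        have hprop := hT (g p) hmem
        have hlen : Bk.headI.length ≤ μ.length := by
          have h3 := hprop.2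
          rw [hgp] at h3
          simp only [List.length_append, List.length_singleton] at h3
          omega
        have hpre : μ₀ ++ [c] <+: μ := by
          rw [← hhead0]
          have h4 : Bk.headI <+: μ ++ [c] := by rw [← hgp]; exact hprop.1
          exact prefix_of_prefix_concat h4 hlen
        exact not_prefix_child hc hM hμ₀ hμ hpre
    · -- recurse into the remaining blocks
      have hne' : ∀ j : Fin Ls'.length, Ls'.get j ≠ [] := by
        intro j
        have := hne ⟨j.1 + 1, by simp only [List.length_cons]; exact Nat.succ_lt_succ j.2⟩
        simpa using this
      have hexp' : ∀ j : Fin Ls'.length, ∃ μ ∈ M, (Ls'.get j).headI = μ ++ [c] := by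
        intro j
        have := hexp ⟨j.1 + 1, by simp only [List.length_cons]; exact Nat.succ_lt_succ j.2⟩
        simpa using this
      have hvis' : ∀ j : Fin Ls'.length,
          DVisit U (Cs ++ [c]) ((Ls'.get j).headI) (Ls'.get j) := by
        intro j
        have := hvis ⟨j.1 + 1, by simp only [List.length_cons]; exact Nat.succ_lt_succ j.2⟩
        simpa using this
      have hind := ih (s + b) (K - b) hne' hexp' hvis' hflat' (by omega) (by omega)
      rw [show s + b + (K - b) - p = s + K - p by omega] at hind
      exact hind

end StableChildrenAux
namespace StableChildrenAux

lemma key {g : ℕ → List ℕ} {c : ℕ} {Cs lam : List ℕ}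
    (hnd : (c :: Cs).Nodup) (hg : Enumerates U (c :: Cs) lam g)
    (hop : ∃ n, 1 ≤ n ∧ (g n).getLast? = some c) :
    ∃ p, 1 ≤ p ∧ (∃ j, j < p ∧ g p = g j ++ [c]) ∧
      (∀ n, p < n → g p <+: g n ∧ (g p).length < (g n).length) ∧
      Enumerates U (Cs ++ [c]) (g p) (fun n => g (p + n)) := by
  have hc : c ∉ Cs := (List.nodup_cons.mp hnd).1
  obtain ⟨n₀, hn₀1, hn₀c⟩ := hop
  obtain ⟨M₀, Ls₀, hd₀⟩ := exists_decomp hg n₀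
  have hLs₀ : Ls₀ ≠ [] := blocks_nonempty hnd hg hn₀1 (le_refl n₀) hn₀c hd₀
  have hMcanon : M₀ = (List.range M₀.length).map g := decomp_M_canon hd₀
  have ha1 : 1 ≤ M₀.length := decomp_M_pos hd₀
  have hstab : ∀ w m M Ls, 1 ≤ w → w ≤ m → (g w).getLast? = some c →
      IsDecomp U g c Cs lam m M Ls → Ls ≠ [] ∧ M = M₀ := by
    intro w m M Ls hw1 hwm hwc hd
    have hLs : Ls ≠ [] := blocks_nonempty hnd hg hw1 hwm hwc hd
    refine ⟨hLs, ?_⟩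
    have hle1 : ¬ (M₀.length < M.length) := fun h => decomp_not_lt hnd hg hd₀ hd hLs₀ h
    have hle2 : ¬ (M.length < M₀.length) := fun h => decomp_not_lt hnd hg hd hd₀ hLs h
    have hlen : M.length = M₀.length := by omega
    rw [decomp_M_canon hd, hlen, ← hMcanon]
  have haB : M₀.length ≤ M₀.length ∧ ∃ μ ∈ M₀, g M₀.length = μ ++ [c] :=
    ⟨le_refl _, (decomp_head0 hd₀ hLs₀).2⟩
  have hBfin : {n : ℕ | M₀.length ≤ n ∧ ∃ μ ∈ M₀, g n = μ ++ [c]}.Finite := by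
    have him : g '' {n : ℕ | M₀.length ≤ n ∧ ∃ μ ∈ M₀, g n = μ ++ [c]} ⊆
        {ν | ν ∈ M₀.map (· ++ [c])} := by
      rintro ν ⟨n, ⟨-, μ, hμ, hgn⟩, rfl⟩
      exact List.mem_map.mpr ⟨μ, hμ, hgn.symm⟩
    exact Set.Finite.of_finite_image ((List.finite_toSet _).subset him)
      ((enum_inj hnd hg).injOn)
  obtain ⟨p, hpB, hpmax⟩ := Set.Finite.exists_maximalFor id _ hBfin ⟨_, haB⟩
  have hpmax' : ∀ n, p < n →
      ¬ (M₀.length ≤ n ∧ ∃ μ ∈ M₀, g n = μ ++ [c]) := by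
    intro n hn hnB
    have := hpmax hnB (le_of_lt hn)
    simp only [id] at this
    omega
  obtain ⟨hap, μp, hμp, hgp⟩ := hpB
  have hp1 : 1 ≤ p := le_trans ha1 hap
  have hgpc : (g p).getLast? = some c := by rw [hgp]; exact List.getLast?_concat
  have hparent : ∃ j, j < p ∧ g p = g j ++ [c] := by
    rw [hMcanon] at hμp
    obtain ⟨j, hjmem, rfl⟩ := List.mem_map.mp hμp
    exact ⟨j, lt_of_lt_of_le (List.mem_range.mp hjmem) hap, hgp⟩
  have hmain : ∀ m, p ≤ m → DVisit U (Cs ++ [c]) (g p)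
      ((List.range' p (m + 1 - p)).map g) := by
    intro m hpm
    obtain ⟨M, Ls, hd⟩ := exists_decomp hg m
    obtain ⟨hLs, hMeq⟩ := hstab p m M Ls hp1 hpm hgpc hd
    rw [hMeq] at hd
    have hlen := decomp_len hd
    have hflat : Ls.flatten = (List.range' M₀.length (m + 1 - M₀.length)).map g := by
      have h1 : Ls.flatten = List.drop M₀.length ((List.range (m + 1)).map g) := by
        rw [hd.1]; exact (List.drop_left).symm
      rw [h1, ← List.map_drop]
      congr 1
      rw [List.range_eq_range']
      have h2 := List.range'_append (s := 0) (m := M₀.length) (n := m + 1 - M₀.length) (step := 1)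
      simp only [one_mul, Nat.zero_add] at h2
      rw [show M₀.length + (m + 1 - M₀.length) = m + 1 by omega] at h2
      rw [← h2, List.drop_left' (by simp)]
    have hmax' : ∀ n, p < n → ∀ μ ∈ M₀, g n ≠ μ ++ [c] := by
      intro n hn μ hμ hne
      exact hpmax' n hn ⟨by omega, μ, hμ, hne⟩
    have hres := seg hc hd.2.1 ⟨μp, hμp, hgp⟩ hmax' Ls M₀.length (m + 1 - M₀.length)
      hd.2.2.1 hd.2.2.2.1 hd.2.2.2.2 hflat hap (by omega)
    rw [show M₀.length + (m + 1 - M₀.length) - p = m + 1 - p by omega] at hres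
    exact hres
  refine ⟨p, hp1, hparent, ?_, ?_⟩
  · intro n hn
    have hv := hmain n (by omega)
    obtain ⟨T, hTeq, hT⟩ := visit_shape hv
    have hrr : List.range' p (n + 1 - p) = p :: List.range' (p + 1) (n - p) := by
      conv_lhs => rw [show n + 1 - p = (n - p) + 1 by omega]
      rw [List.range'_succ]
    rw [hrr, List.map_cons] at hTeq
    have hTmap : T = (List.range' (p + 1) (n - p)).map g :=
      (((List.cons.injEq _ _ _ _).mp hTeq).2).symm
    have hmem : g n ∈ T := by
      rw [hTmap]
      exact List.mem_map.mpr ⟨n, List.mem_range'_1.mpr ⟨by omega, by omega⟩, rfl⟩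
    exact hT (g n) hmem
  · intro m'
    have hv := hmain (p + m') (by omega)
    have heq2 : (List.range' p (p + m' + 1 - p)).map g =
        (List.range (m' + 1)).map (fun n => g (p + n)) := by
      rw [show p + m' + 1 - p = m' + 1 by omega, List.range'_eq_map_range, List.map_map]
      rfl
    rw [heq2] at hv
    exact hv

end StableChildrenAux
namespace StableChildrenAux

lemma tail_many {g : ℕ → List ℕ} {d m : ℕ}
    (h : ∀ q, ∃ n, q < n ∧ (g n).getLast? = some d) :
    ∀ q, ∃ n, q < n ∧ (g (m + n)).getLast? = some d := by
  intro q
  obtain ⟨n, hn, hc⟩ := h (m + q)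
  exact ⟨n - m, by omega, by rw [show m + (n - m) = n by omega]; exact hc⟩

lemma inner_head {d : ℕ} {Cs lam : List ℕ} {g : ℕ → List ℕ} (hnd : (d :: Cs).Nodup)
    (hg : Enumerates U (d :: Cs) lam g)
    (hmany : ∀ q, ∃ n, q < n ∧ (g n).getLast? = some d) :
    ∃ m, 1 ≤ m ∧ (∃ j, j < m ∧ g m = g j ++ [d]) ∧
      (∀ n, m < n → g m <+: g n ∧ (g m).length < (g n).length) ∧
      ∃ C', C'.Nodup ∧ d ∈ C' ∧ Enumerates U C' (g m) (fun n => g (m + n)) ∧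
        (∀ q, ∃ n, q < n ∧ (g (m + n)).getLast? = some d) := by
  obtain ⟨n, hn, hc⟩ := hmany 0
  obtain ⟨p, hp1, hparent, hstable, henum⟩ := key hnd hg ⟨n, hn, hc⟩
  exact ⟨p, hp1, hparent, hstable,
    Cs ++ [d], (List.perm_append_singleton d Cs).symm.nodup hnd, by simp,
    henum, tail_many hmany⟩

lemma inner {d : ℕ} : ∀ (fuel : ℕ) (C lam : List ℕ) (g : ℕ → List ℕ),
    C.Nodup → d ∈ C → List.idxOf d C ≤ fuel → Enumerates U C lam g →
    (∀ q, ∃ n, q < n ∧ (g n).getLast? = some d) →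
    ∃ m, 1 ≤ m ∧ (∃ j, j < m ∧ g m = g j ++ [d]) ∧
      (∀ n, m < n → g m <+: g n ∧ (g m).length < (g n).length) ∧
      ∃ C', C'.Nodup ∧ d ∈ C' ∧ Enumerates U C' (g m) (fun n => g (m + n)) ∧
        (∀ q, ∃ n, q < n ∧ (g (m + n)).getLast? = some d) := by
  intro fuel
  induction fuel with
  | zero =>
    intro C lam g hnd hdC hidx hg hmany
    obtain ⟨c, Cs, rfl⟩ := List.exists_cons_of_ne_nil (List.ne_nil_of_mem hdC)
    have hcd : c = d := by
      by_contra hne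
      rw [List.idxOf_cons_ne _ hne] at hidx
      omega
    subst hcd
    exact inner_head hnd hg hmany
  | succ fuel ih =>
    intro C lam g hnd hdC hidx hg hmany
    obtain ⟨c, Cs, rfl⟩ := List.exists_cons_of_ne_nil (List.ne_nil_of_mem hdC)
    by_cases hcd : c = d
    · subst hcd
      exact inner_head hnd hg hmany
    · have hdCs : d ∈ Cs := by
        rcases List.mem_cons.mp hdC with h | h
        · exact absurd h.symm hcd
        · exact h
      have hidx' : List.idxOf d Cs ≤ fuel := by
        rw [List.idxOf_cons_ne _ hcd] at hidx
        omega
      by_cases hop : ∃ n, 1 ≤ n ∧ (g n).getLast? = some c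
      · obtain ⟨p, hp1, -, hstable, henum⟩ := key hnd hg hop
        have hnd' : (Cs ++ [c]).Nodup := (List.perm_append_singleton c Cs).symm.nodup hnd
        have hd' : d ∈ Cs ++ [c] := List.mem_append.mpr (Or.inl hdCs)
        have hidx'' : List.idxOf d (Cs ++ [c]) ≤ fuel := by
          rw [List.idxOf_append_of_mem hdCs]
          omega
        obtain ⟨m', hm'1, ⟨j', hj', hchild'⟩, hstable', C₂, hnd₂, hd₂, henum₂, hmany₂⟩ :=
          ih (Cs ++ [c]) (g p) (fun n => g (p + n)) hnd' hd' hidx'' henum (tail_many hmany)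
        refine ⟨p + m', by omega, ⟨p + j', by omega, by simpa using hchild'⟩, ?_,
          C₂, hnd₂, hd₂, ?_, ?_⟩
        · intro n hn
          have hs := hstable' (n - p) (by omega)
          simpa [show p + (n - p) = n by omega] using hs
        · have h3 : Enumerates U C₂ (g (p + m')) (fun n => g (p + (m' + n))) := henum₂
          simpa [Nat.add_assoc] using h3
        · intro q
          obtain ⟨n, hnq, hcd'⟩ := hmany₂ q
          exact ⟨n, hnq, by simpa [Nat.add_assoc] using hcd'⟩
      · push_neg at hop
        have hop' : ∀ n, 1 ≤ n → (g n).getLast? ≠ some c := fun n h1 => (hop n h1)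
        have hg' := shrink hnd hg hop'
        exact ih Cs lam g (List.nodup_cons.mp hnd).2 hdCs hidx' hg' hmany

lemma outer {d : ℕ} : ∀ (q : ℕ) (C lam : List ℕ) (g : ℕ → List ℕ),
    C.Nodup → d ∈ C → Enumerates U C lam g →
    (∀ q', ∃ n, q' < n ∧ (g n).getLast? = some d) →
    ∃ m, q < m ∧ (∃ j, j < m ∧ g m = g j ++ [d]) ∧
      (∀ n, m < n → g m <+: g n ∧ (g m).length < (g n).length) := by
  intro q
  induction q using Nat.strong_induction_on with
  | _ q ih =>
    intro C lam g hnd hdC hg hmany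
    obtain ⟨m, hm1, hchild, hstable, C', hnd', hd', henum', hmany'⟩ :=
      inner (List.idxOf d C) C lam g hnd hdC (le_refl _) hg hmany
    by_cases hqm : q < m
    · exact ⟨m, hqm, hchild, hstable⟩
    · obtain ⟨m', hm', ⟨j', hj', hchild'⟩, hstable'⟩ :=
        ih (q - m) (by omega) C' (g m) (fun n => g (m + n)) hnd' hd' henum' hmany'
      refine ⟨m + m', by omega, ⟨m + j', by omega, by simpa using hchild'⟩, ?_⟩
      intro n hn
      have hs := hstable' (n - m) (by omega)
      simpa [show m + (n - m) = n by omega] using hs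

end StableChildrenAux
/-- if infinitely many nodes of the complete D-visit are d_i-children
of nodes of the visit, then infinitely many *stable* nodes are d_i-children of
nodes of the visit. -/
theorem stable_children (k : ℕ) (U : Set (List ℕ)) (hU : IsKTree k U)
    (D : List ℕ) (hDnd : D.Nodup) (hDk : ∀ d ∈ D, d < k)
    (lam : List ℕ) (hlam : lam ∈ U)
    (hinf : (subtreeD U D lam).Infinite)
    (f : ℕ → List ℕ) (hf : Enumerates U D lam f)
    (i : ℕ) (hi : i < D.length)
    (hmany : ∀ q : ℕ, ∃ m, q < m ∧ ∃ ν ∈ Set.range f, f m = ν ++ [D.get ⟨i, hi⟩]) :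
    ∀ q : ℕ, ∃ m, q < m ∧ Stable f (f m) ∧
      ∃ ν ∈ Set.range f, f m = ν ++ [D.get ⟨i, hi⟩] := by
  intro q
  have hd : D.get ⟨i, hi⟩ ∈ D := List.get_mem D ⟨i, hi⟩
  have hmany' : ∀ q', ∃ n, q' < n ∧ (f n).getLast? = some (D.get ⟨i, hi⟩) := by
    intro q'
    obtain ⟨m, hm, ν, -, hv⟩ := hmany q'
    exact ⟨m, hm, by rw [hv]; exact List.getLast?_concat⟩
  obtain ⟨m, hqm, ⟨j, hj, hchild⟩, hstable⟩ :=
    StableChildrenAux.outer q D lam f hDnd hd hf hmany'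
  refine ⟨m, hqm, ⟨m, rfl, ?_⟩, f j, ⟨j, rfl⟩, hchild⟩
  intro n hn
  refine ⟨(hstable n hn).1, ?_⟩
  intro h
  have h2 := (hstable n hn).2
  rw [h] at h2
  exact lt_irrefl _ h2
end

section
/- Let f: [ℕ]² → k be a coloring and let ≺_E be the Erdős ordering defined by: y is an ≺_E-child of x iff x < y and for all z < x with z ≺_E x, f({z,x}) = f({z,y}), taking the least such x. Then (ℕ, ≺_E) is a tree, and it is an Erdős tree: for every node x and every i < k, all ≺_E-descendants y, z of the i-th child of x satisfy f({x,y}) = f({x,z}) = the color of the edge from x to that child. -/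
/-- The Erdős ancestor ordering associated to a coloring `c` of pairs:
`erdosAnc c x y` iff `x < y` and every `≺_E`-ancestor `z` of `x` colors the
edges to `x` and to `y` alike. -/
def erdosAnc (c : ℕ → ℕ → ℕ) (x y : ℕ) : Prop :=
  x < y ∧ ∀ z, z < x → erdosAnc c z x → c z x = c z y
termination_by x

/-- `y` is a child of `x` in the Erdős tree: an ancestor with nothing in between. -/
def erdosChild (c : ℕ → ℕ → ℕ) (x y : ℕ) : Prop :=
  erdosAnc c x y ∧ ∀ w, ¬(erdosAnc c x w ∧ erdosAnc c w y)

lemma erdosAnc_def (c : ℕ → ℕ → ℕ) (x y : ℕ) :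
    erdosAnc c x y ↔ x < y ∧ ∀ z, z < x → erdosAnc c z x → c z x = c z y := by
  rw [erdosAnc]

lemma erdosAnc_trans (c : ℕ → ℕ → ℕ) :
    ∀ x y z, erdosAnc c x y → erdosAnc c y z → erdosAnc c x z := by
  intro x
  induction x using Nat.strong_induction_on with
  | _ x ih =>
    intro y z hxy hyz
    have hxy' := (erdosAnc_def c x y).mp hxy
    have hyz' := (erdosAnc_def c y z).mp hyz
    rw [erdosAnc_def]
    refine ⟨hxy'.1.trans hyz'.1, fun w hw hwx => ?_⟩
    have hwy : erdosAnc c w y := ih w hw x y hwx hxy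
    have h1 : c w x = c w y := hxy'.2 w hw hwx
    have h2 : c w y = c w z := hyz'.2 w (hw.trans hxy'.1) hwy
    exact h1.trans h2

lemma erdosAnc_comp (c : ℕ → ℕ → ℕ) :
    ∀ x₁ y x₂, erdosAnc c x₁ y → erdosAnc c x₂ y → x₁ < x₂ → erdosAnc c x₁ x₂ := by
  intro x₁
  induction x₁ using Nat.strong_induction_on with
  | _ x₁ ih =>
    intro y x₂ h1 h2 hlt
    have h1' := (erdosAnc_def c x₁ y).mp h1
    have h2' := (erdosAnc_def c x₂ y).mp h2
    rw [erdosAnc_def]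
    refine ⟨hlt, fun z hz hzx => ?_⟩
    have hzy : erdosAnc c z y := erdosAnc_trans c z x₁ y hzx h1
    have hzx₂ : erdosAnc c z x₂ := ih z hz y x₂ hzy h2 (hz.trans hlt)
    have e1 : c z x₁ = c z y := h1'.2 z hz hzx
    have e2 : c z x₂ = c z y := h2'.2 z (hz.trans hlt) hzx₂
    exact e1.trans e2.symm

/-- (ℕ, erdosAnc c) is a tree (transitive, ancestors of a node linearly
ordered, rooted at 0) and it is an Erdős tree: all edges from x to descendants
of the same child of x get the same color as the edge to that child. -/
theorem erdos_ordering_tree (k : ℕ) (hk : 2 ≤ k) (c : ℕ → ℕ → ℕ)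
    (hsym : ∀ x y, c x y = c y x) (hval : ∀ x y, c x y < k) :
    (∀ x y z, erdosAnc c x y → erdosAnc c y z → erdosAnc c x z) ∧
    (∀ y x₁ x₂, erdosAnc c x₁ y → erdosAnc c x₂ y →
      x₁ = x₂ ∨ erdosAnc c x₁ x₂ ∨ erdosAnc c x₂ x₁) ∧
    (∀ y, 0 < y → erdosAnc c 0 y) ∧
    (∀ x w y z, erdosChild c x w →
      (w = y ∨ erdosAnc c w y) → (w = z ∨ erdosAnc c w z) →
      c x y = c x w ∧ c x z = c x w) := by
  refine ⟨erdosAnc_trans c, ?_, ?_, ?_⟩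
  · intro y x₁ x₂ h1 h2
    rcases lt_trichotomy x₁ x₂ with h | h | h
    · exact Or.inr (Or.inl (erdosAnc_comp c x₁ y x₂ h1 h2 h))
    · exact Or.inl h
    · exact Or.inr (Or.inr (erdosAnc_comp c x₂ y x₁ h2 h1 h))
  · intro y hy
    rw [erdosAnc_def]
    exact ⟨hy, fun z hz _ => absurd hz (Nat.not_lt_zero z)⟩
  · intro x w y z hchild hy hz
    have hxw := hchild.1
    have hxltw := ((erdosAnc_def c x w).mp hxw).1
    have key : ∀ u, (w = u ∨ erdosAnc c w u) → c x u = c x w := by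
      intro u hu
      rcases hu with rfl | hu
      · rfl
      · exact (((erdosAnc_def c w u).mp hu).2 x hxltw hxw).symm
    exact ⟨key y hy, key z hz⟩
end

section
/- If r is an infinite branch of an Erdős tree for a coloring f: [ℕ]² → k, and x ∈ r has some descendant y ∈ r with f({x,y}) = h, then for every descendant z ∈ r of x, f({x,z}) = h. Consequently, r induces a 1-coloring of its nodes (color each x ∈ r by the color of edges from x to its descendants in r), and any infinite monochromatic set of nodes of r under this 1-coloring is an infinite homogeneous set for f. -/
/-- on an infinite branch r of an Erdős tree for a coloring c, once a
node x of r has a descendant in r with edge color h, all its descendants in r give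
edge color h; hence r induces a 1-coloring of its nodes, and any infinite
monochromatic set of nodes of r under this 1-coloring is homogeneous for c. -/
theorem erdos_branch_one_coloring (k : ℕ) (hk : 2 ≤ k) (c : ℕ → ℕ → ℕ)
    (hsym : ∀ x y, c x y = c y x) (hval : ∀ x y, c x y < k)
    (anc : ℕ → ℕ → Prop) (hlt : ∀ x y, anc x y → x < y)
    (herdos : ∀ x w y, anc x w → anc w y → c x w = c x y)
    (r : Set ℕ) (hchain : ∀ x ∈ r, ∀ y ∈ r, x = y ∨ anc x y ∨ anc y x)
    (hinf : r.Infinite) :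
    (∀ x ∈ r, ∀ (h : ℕ), ∀ y ∈ r, anc x y → c x y = h →
      ∀ z ∈ r, anc x z → c x z = h) ∧
    (∀ H : Set ℕ, H ⊆ r → H.Infinite → ∀ h : ℕ,
      (∀ x ∈ H, ∀ y ∈ r, anc x y → c x y = h) →
      ∀ x ∈ H, ∀ y ∈ H, x ≠ y → c x y = h) := by
  constructor
  · intro x hx h y hy hxy hcy z hz hxz
    rcases hchain y hy z hz with rfl | hyz | hzy
    · exact hcy
    · rw [← herdos x y z hxy hyz]; exact hcy
    · rw [herdos x z y hxz hzy]; exact hcy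
  · intro H hHr hHinf h hmono x hx y hy hxy
    rcases hchain x (hHr hx) y (hHr hy) with rfl | hxy' | hyx
    · exact absurd rfl hxy
    · exact hmono x hx y (hHr hy) hxy'
    · rw [hsym]; exact hmono y hy x (hHr hx) hyx
end

section
/- If a recursive coloring c: [ℕ]² → k admits an Erdős tree T whose unique infinite branch r is Δ⁰₂-definable, then c has an infinite Δ⁰₂ homogeneous set; hence, since there exists a recursive 2-coloring of [ℕ]² with no infinite Σ⁰₂ homogeneous set (Jockusch), the unique infinite branch of the tree constructed from the complete visit is not in general Δ⁰₂. -/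
/-- T is Δ⁰₂: limit-computable (Shoenfield limit lemma). -/
def Delta2 (T : Set ℕ) : Prop :=
  ∃ g : ℕ → ℕ → Bool, Computable₂ g ∧
    ∀ x, ∃ N, ∀ n, N ≤ n → (g x n = true ↔ x ∈ T)

/-- An Erdős tree for the coloring c: a tree on a subset T of ℕ whose ancestor
relation anc refines <, with linearly ordered ancestors, such that all edges from
a node x to iterated descendants of the same child of x have the same c-color. -/
def IsErdosTree (c : ℕ → ℕ → ℕ) (T : Set ℕ) (anc : ℕ → ℕ → Prop) : Prop :=
  (∀ x y, anc x y → x ∈ T ∧ y ∈ T ∧ x < y) ∧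
  (∀ x y z, anc x y → anc y z → anc x z) ∧
  (∀ y x₁ x₂, anc x₁ y → anc x₂ y → x₁ = x₂ ∨ anc x₁ x₂ ∨ anc x₂ x₁) ∧
  (∀ x w y, anc x w → anc w y → c x w = c x y)

/-- r is an infinite branch of the tree (T, anc): an infinite chain, downward
closed under anc. -/
def IsInfBranchN (T : Set ℕ) (anc : ℕ → ℕ → Prop) (r : Set ℕ) : Prop :=
  r ⊆ T ∧ r.Infinite ∧ (∀ x ∈ r, ∀ y ∈ r, x = y ∨ anc x y ∨ anc y x) ∧
  (∀ y ∈ r, ∀ x, anc x y → x ∈ r)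

namespace BND17

open Nat.Partrec (Code)
open Nat.Partrec.Code

/-! ### Bounded search helpers -/

/-- Least `e < n` with `p e = true`. -/
def leastB (p : ℕ → Bool) : ℕ → Option ℕ
  | 0 => none
  | n+1 => Option.casesOn (leastB p n) (cond (p n) (some n) none) some

/-- Number of `y < n` with `p y = true`. -/
def cntB (p : ℕ → Bool) : ℕ → ℕ
  | 0 => 0
  | n+1 => cntB p n + cond (p n) 1 0

/-- Value of `f` at the largest `t ≤ n` where `f t` is defined. -/
def lastSome (f : ℕ → Option ℕ) : ℕ → Option ℕ
  | 0 => f 0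
  | t+1 => Option.casesOn (f (t+1)) (lastSome f t) some

theorem leastB_none {p : ℕ → Bool} : ∀ {n}, leastB p n = none → ∀ j < n, p j = false := by
  intro n
  induction n with
  | zero => intro _ j hj; omega
  | succ n ih =>
    intro h j hj
    cases hln : leastB p n with
    | some e => simp [leastB, hln] at h
    | none =>
      rcases Nat.lt_succ_iff_lt_or_eq.1 hj with hj | rfl
      · exact ih hln j hj
      · simp only [leastB, hln] at h
        cases hpj : p j <;> simp [hpj] at h ⊢

theorem leastB_spec {p : ℕ → Bool} : ∀ {n e}, leastB p n = some e →
    p e = true ∧ e < n ∧ ∀ j < e, p j = false := by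
  intro n
  induction n with
  | zero => intro e h; simp [leastB] at h
  | succ n ih =>
    intro e h
    cases hln : leastB p n with
    | some e' =>
      simp only [leastB, hln] at h
      obtain rfl : e' = e := by simpa using h
      obtain ⟨h1, h2, h3⟩ := ih hln
      exact ⟨h1, by omega, h3⟩
    | none =>
      simp only [leastB, hln] at h
      cases hpn : p n with
      | false => simp [hpn] at h
      | true =>
        simp only [hpn, cond_true, Option.some.injEq] at h
        subst h
        exact ⟨hpn, Nat.lt_succ_self _, leastB_none hln⟩

theorem leastB_le {p : ℕ → Bool} {n e} (he : p e = true) (hen : e < n) :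
    ∃ e', leastB p n = some e' ∧ e' ≤ e := by
  cases h : leastB p n with
  | none => exact absurd (leastB_none h e hen) (by simp [he])
  | some e' =>
    obtain ⟨h1, h2, h3⟩ := leastB_spec h
    refine ⟨e', rfl, ?_⟩
    by_contra hlt
    exact absurd (h3 e (by omega)) (by simp [he])

theorem leastB_eq {p : ℕ → Bool} {n e} (he : p e = true) (hen : e < n)
    (hmin : ∀ j < e, p j = false) : leastB p n = some e := by
  obtain ⟨e', h, hle⟩ := leastB_le he hen
  obtain ⟨h1, _, _⟩ := leastB_spec h
  rcases Nat.lt_or_ge e' e with hlt | hge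
  · exact absurd (hmin e' hlt) (by simp [h1])
  · obtain rfl : e' = e := le_antisymm hle hge
    exact h

theorem cntB_congr {p q : ℕ → Bool} : ∀ {n}, (∀ y < n, p y = q y) → cntB p n = cntB q n := by
  intro n
  induction n with
  | zero => intro _; rfl
  | succ n ih =>
    intro h
    simp only [cntB, ih fun y hy => h y (by omega), h n (Nat.lt_succ_self _)]

theorem cntB_eq_count (p : ℕ → Prop) [DecidablePred p] (n : ℕ) :
    cntB (fun y => decide (p y)) n = Nat.count p n := by
  induction n with
  | zero => rfl
  | succ n ih =>
    by_cases h : p n <;> simp [Nat.count_succ, cntB, ih, h]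

theorem cntB_mono (p : ℕ → Bool) : Monotone (cntB p) :=
  monotone_nat_of_le_succ fun n => by cases h : p n <;> simp [cntB, h]

theorem cntB_lt_cntB {p : ℕ → Bool} {a b : ℕ} (hab : a < b) (ha : p a = true) :
    cntB p a < cntB p b := by
  have : cntB p a + 1 ≤ cntB p (a + 1) := by simp [cntB, ha]
  have := cntB_mono p (show a + 1 ≤ b by omega)
  omega

theorem lastSome_spec {f : ℕ → Option ℕ} : ∀ {n}, (∃ t ≤ n, (f t).isSome) →
    ∃ t ≤ n, lastSome f n = f t ∧ (f t).isSome ∧ ∀ u ≤ n, t < u → f u = none := by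
  intro n
  induction n with
  | zero =>
    rintro ⟨t, ht, hsome⟩
    obtain rfl : t = 0 := by omega
    exact ⟨0, le_rfl, rfl, hsome, fun u hu htu => by omega⟩
  | succ n ih =>
    rintro ⟨t, ht, hsome⟩
    cases hfn : f (n+1) with
    | some v =>
      exact ⟨n+1, le_rfl, by simp [lastSome, hfn], by simp [hfn], fun u hu htu => by omega⟩
    | none =>
      have htn : t ≤ n := by
        rcases Nat.lt_succ_iff_lt_or_eq.1 (Nat.lt_succ_of_le ht) with h | rfl
        · omega
        · rw [hfn] at hsome; simp at hsome
      obtain ⟨t', ht', h1, h2, h3⟩ := ih ⟨t, htn, hsome⟩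
      refine ⟨t', by omega, by simp [lastSome, hfn, h1], h2, fun u hu htu => ?_⟩
      rcases Nat.lt_succ_iff_lt_or_eq.1 (Nat.lt_succ_of_le hu) with h | rfl
      · exact h3 u (by omega) htu
      · exact hfn


/-! ### Computability of the helpers -/

section computability

variable {α : Type*} [Primcodable α]

theorem leastB_computable {p : α → ℕ → Bool} (hp : Computable₂ p) :
    Computable₂ fun a n => leastB (p a) n := by
  have h : Computable fun x : α × ℕ =>
      Nat.rec (motive := fun _ => Option ℕ) none
        (fun y IH => Option.casesOn IH (cond (p x.1 y) (some y) none) some) x.2 :=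
    Computable.nat_rec Computable.snd (Computable.const none)
      ((Computable.option_casesOn (Computable.snd.comp Computable.snd)
        (Computable.cond (hp.comp (Computable.fst.comp Computable.fst)
            (Computable.fst.comp Computable.snd))
          (Computable.option_some.comp (Computable.fst.comp Computable.snd))
          (Computable.const none))
        (Computable.option_some.comp Computable.snd).to₂).to₂)
  exact (h.of_eq fun x => by
    obtain ⟨a, n⟩ := x
    induction n with
    | zero => rfl
    | succ n ih => simp only [leastB]; rw [ih])

theorem cntB_computable {p : α → ℕ → Bool} (hp : Computable₂ p) :
    Computable₂ fun a n => cntB (p a) n := by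
  have h : Computable fun x : α × ℕ =>
      Nat.rec (motive := fun _ => ℕ) 0
        (fun y IH => IH + cond (p x.1 y) 1 0) x.2 :=
    Computable.nat_rec Computable.snd (Computable.const 0)
      ((Primrec₂.to_comp Primrec.nat_add).comp (Computable.snd.comp Computable.snd)
        (Computable.cond (hp.comp (Computable.fst.comp Computable.fst)
            (Computable.fst.comp Computable.snd))
          (Computable.const 1) (Computable.const 0))).to₂
  exact (h.of_eq fun x => by
    obtain ⟨a, n⟩ := x
    induction n with
    | zero => rfl
    | succ n ih => simp only [cntB]; rw [ih])

theorem lastSome_computable {f : α → ℕ → Option ℕ} (hf : Computable₂ f) :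
    Computable₂ fun a n => lastSome (f a) n := by
  have h : Computable fun x : α × ℕ =>
      Nat.rec (motive := fun _ => Option ℕ) (f x.1 0)
        (fun y IH => Option.casesOn (f x.1 (y+1)) IH some) x.2 :=
    Computable.nat_rec Computable.snd
      (hf.comp Computable.fst (Computable.const 0))
      ((Computable.option_casesOn
        (hf.comp (Computable.fst.comp Computable.fst)
          ((Primrec₂.to_comp Primrec.nat_add).comp (Computable.fst.comp Computable.snd)
            (Computable.const 1)))
        (Computable.snd.comp Computable.snd)
        (Computable.option_some.comp Computable.snd).to₂).to₂)
  exact (h.of_eq fun x => by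
    obtain ⟨a, n⟩ := x
    induction n with
    | zero => rfl
    | succ n ih => simp only [lastSome]; rw [ih])

end computability

/-! ### The coloring -/

/-- Approximate membership of `x` in the `e`-th limit-computable set at stage `s`:
the value of the `e`-th partial computable function on input `(x, t)` for the largest
`t ≤ s` for which the computation converges within `s` steps. -/
def ghat (e x s : ℕ) : Bool :=
  Option.casesOn
    (lastSome (fun t => Nat.Partrec.Code.evaln s
      (Denumerable.ofNat Nat.Partrec.Code e) (Nat.pair x t)) s)
    false (fun v => decide (v = 1))

/-- `x` is believed (at stage `s`) to belong to the `e`-th limit set. -/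
def inA (e x s : ℕ) : Bool := decide (x < s) && ghat e x s

/-- The believed rank of `x` in the `e`-th limit set at stage `s`. -/
def rnk (e x s : ℕ) : ℕ := cntB (fun y => inA e y s) x

/-- Requirement `e` controls `x` at stage `s`. -/
def ctrl (e x s : ℕ) : Bool := inA e x s && decide (rnk e x s < 2 * 3 ^ e)

/-- The highest-priority requirement controlling `x` at stage `s`. -/
def est (x s : ℕ) : Option ℕ := leastB (fun e => ctrl e x s) s

/-- The color given to the pair `(x, s)`, `x < s`, decided at stage `s`. -/
def rule (x s : ℕ) : ℕ :=
  Option.casesOn (est x s) 0 (fun e => cond (decide (rnk e x s < 3 ^ e)) 0 1)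

/-- The Jockusch-style recursive coloring with no infinite Δ⁰₂ homogeneous set. -/
def jc (x y : ℕ) : ℕ :=
  cond (decide (x < y)) (rule x y) (cond (decide (y < x)) (rule y x) 0)

section colorComputable

set_option maxHeartbeats 1000000

theorem ghat_computable : Computable fun q : ℕ × ℕ × ℕ => ghat q.1 q.2.1 q.2.2 := by
  have hofNat : Computable (Denumerable.ofNat Nat.Partrec.Code) :=
    (Primrec.ofNat Nat.Partrec.Code).to_comp
  have hevaln : Computable fun a : (ℕ × Nat.Partrec.Code) × ℕ =>
      Nat.Partrec.Code.evaln a.1.1 a.1.2 a.2 := Nat.Partrec.Code.primrec_evaln.to_comp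
  have hF : Computable₂ fun (q : ℕ × ℕ × ℕ) (t : ℕ) =>
      Nat.Partrec.Code.evaln q.2.2 (Denumerable.ofNat Nat.Partrec.Code q.1)
        (Nat.pair q.2.1 t) := by
    have : Computable fun x : (ℕ × ℕ × ℕ) × ℕ =>
        ((x.1.2.2, Denumerable.ofNat Nat.Partrec.Code x.1.1), Nat.pair x.1.2.1 x.2) :=
      Computable.pair
        (Computable.pair (Computable.snd.comp (Computable.snd.comp Computable.fst))
          (hofNat.comp (Computable.fst.comp Computable.fst)))
        (Primrec₂.natPair.to_comp.comp (Computable.fst.comp (Computable.snd.comp Computable.fst))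
          Computable.snd)
    exact (hevaln.comp this).to₂
  have hlast : Computable fun q : ℕ × ℕ × ℕ =>
      lastSome (fun t => Nat.Partrec.Code.evaln q.2.2
        (Denumerable.ofNat Nat.Partrec.Code q.1) (Nat.pair q.2.1 t)) q.2.2 :=
    (lastSome_computable hF).comp Computable.id (Computable.snd.comp Computable.snd)
  have hdec : Computable fun v : ℕ => decide (v = 1) :=
    (Primrec.eq.comp Primrec.id (Primrec.const 1)).decide.to_comp
  exact Computable.option_casesOn hlast (Computable.const false) (hdec.comp Computable.snd).to₂

theorem inA_computable : Computable fun q : ℕ × ℕ × ℕ => inA q.1 q.2.1 q.2.2 := by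
  have hlt : Computable fun q : ℕ × ℕ × ℕ => decide (q.2.1 < q.2.2) :=
    (Primrec.nat_lt.comp (Primrec.fst.comp Primrec.snd)
      (Primrec.snd.comp Primrec.snd)).decide.to_comp
  exact Primrec.and.to_comp.comp hlt ghat_computable

theorem rnk_computable : Computable fun q : ℕ × ℕ × ℕ => rnk q.1 q.2.1 q.2.2 := by
  have hp : Computable₂ fun (q : ℕ × ℕ × ℕ) (y : ℕ) => inA q.1 y q.2.2 := by
    have : Computable fun x : (ℕ × ℕ × ℕ) × ℕ => (x.1.1, x.2, x.1.2.2) :=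
      Computable.pair (Computable.fst.comp Computable.fst)
        (Computable.pair Computable.snd
          (Computable.snd.comp (Computable.snd.comp Computable.fst)))
    exact (inA_computable.comp this).to₂
  exact (cntB_computable hp).comp Computable.id (Computable.fst.comp Computable.snd)

theorem pow3_computable : Computable fun e : ℕ => 3 ^ e :=
  ((Primrec₂.unpaired'.1 Nat.Primrec.pow).comp (Primrec.const 3) Primrec.id).to_comp

theorem ctrl_computable : Computable fun q : ℕ × ℕ × ℕ => ctrl q.1 q.2.1 q.2.2 := by
  have hbound : Computable fun q : ℕ × ℕ × ℕ => 2 * 3 ^ q.1 :=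
    Primrec.nat_mul.to_comp.comp (Computable.const 2) (pow3_computable.comp Computable.fst)
  have hlt : Computable fun q : ℕ × ℕ × ℕ => decide (rnk q.1 q.2.1 q.2.2 < 2 * 3 ^ q.1) := by
    have := Primrec.nat_lt.decide.to_comp.comp rnk_computable hbound
    exact this
  exact Primrec.and.to_comp.comp inA_computable hlt

theorem est_computable : Computable₂ est := by
  have hp : Computable₂ fun (q : ℕ × ℕ) (e : ℕ) => ctrl e q.1 q.2 := by
    have : Computable fun x : (ℕ × ℕ) × ℕ => (x.2, x.1.1, x.1.2) :=
      Computable.pair Computable.snd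
        (Computable.pair (Computable.fst.comp Computable.fst)
          (Computable.snd.comp Computable.fst))
    exact (ctrl_computable.comp this).to₂
  have h2 : Computable fun q : ℕ × ℕ => leastB (fun e => ctrl e q.1 q.2) q.2 :=
    (leastB_computable hp).comp Computable.id Computable.snd
  exact Computable₂.mk (h2.of_eq fun q => rfl)

theorem rule_computable : Computable₂ rule := by
  have hg : Computable₂ fun (q : ℕ × ℕ) (e : ℕ) =>
      cond (decide (rnk e q.1 q.2 < 3 ^ e)) 0 1 := by
    have hr : Computable fun x : (ℕ × ℕ) × ℕ => rnk x.2 x.1.1 x.1.2 := by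
      have hpair : Computable fun x : (ℕ × ℕ) × ℕ => ((x.2, x.1.1, x.1.2) : ℕ × ℕ × ℕ) :=
        Computable.pair Computable.snd
          (Computable.pair (Computable.fst.comp Computable.fst)
            (Computable.snd.comp Computable.fst))
      have h := Computable.comp rnk_computable hpair
      exact h.of_eq fun x => rfl
    have hlt : Computable fun x : (ℕ × ℕ) × ℕ => decide (rnk x.2 x.1.1 x.1.2 < 3 ^ x.2) :=
      Primrec.nat_lt.decide.to_comp.comp hr (pow3_computable.comp Computable.snd)
    exact (Computable.cond hlt (Computable.const 0) (Computable.const 1)).to₂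
  have : Computable fun q : ℕ × ℕ =>
      (Option.casesOn (est q.1 q.2) 0 (fun e => cond (decide (rnk e q.1 q.2 < 3 ^ e)) 0 1) : ℕ) :=
    Computable.option_casesOn (est_computable.comp Computable.fst Computable.snd)
      (Computable.const 0) hg
  exact Computable₂.mk (this.of_eq fun q => rfl)

theorem jc_computable : Computable₂ jc := by
  have h1 : Computable fun q : ℕ × ℕ => decide (q.1 < q.2) :=
    Primrec.nat_lt.decide.to_comp.comp Computable.fst Computable.snd
  have h2 : Computable fun q : ℕ × ℕ => decide (q.2 < q.1) :=
    Primrec.nat_lt.decide.to_comp.comp Computable.snd Computable.fst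
  have hr1 : Computable fun q : ℕ × ℕ => rule q.1 q.2 :=
    rule_computable.comp Computable.fst Computable.snd
  have hr2 : Computable fun q : ℕ × ℕ => rule q.2 q.1 :=
    rule_computable.comp Computable.snd Computable.fst
  exact (Computable.cond h1 hr1 (Computable.cond h2 hr2 (Computable.const 0))).to₂

end colorComputable

theorem jc_symm (x y : ℕ) : jc x y = jc y x := by
  unfold jc
  rcases lt_trichotomy x y with h | h | h
  · simp [h, not_lt.2 h.le]
  · simp [h]
  · simp [h, not_lt.2 h.le]

theorem rule_lt_two (x s : ℕ) : rule x s < 2 := by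
  unfold rule
  cases est x s with
  | none => simp
  | some e => cases hb : decide (rnk e x s < 3 ^ e) <;> simp [hb]

theorem jc_lt_two (x y : ℕ) : jc x y < 2 := by
  unfold jc
  cases decide (x < y) <;> cases decide (y < x) <;>
    simp [rule_lt_two] <;> exact Nat.le_of_lt_succ (rule_lt_two _ _)

/-! ### Limit behaviour of the universal approximation -/

theorem settle_seg {Q : ℕ → ℕ → Prop} (h : ∀ x, ∃ N, ∀ n, N ≤ n → Q x n) (m : ℕ) :
    ∃ N, ∀ n, N ≤ n → ∀ x, x ≤ m → Q x n := by
  induction m with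
  | zero =>
    obtain ⟨N, hN⟩ := h 0
    refine ⟨N, fun n hn x hx => ?_⟩
    obtain rfl : x = 0 := by omega
    exact hN n hn
  | succ m ih =>
    obtain ⟨N₁, h1⟩ := ih
    obtain ⟨N₂, h2⟩ := h (m + 1)
    refine ⟨max N₁ N₂, fun n hn x hx => ?_⟩
    rcases Nat.lt_succ_iff_lt_or_eq.1 (Nat.lt_succ_of_le hx) with hx' | rfl
    · exact h1 n (le_trans (le_max_left _ _) hn) x (by omega)
    · exact h2 n (le_trans (le_max_right _ _) hn)

/-- Every limit-computable set appears as the limit of `ghat e` for some `e`. -/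
theorem ghat_lim {g : ℕ → ℕ → Bool} (hg : Computable₂ g) (H : Set ℕ)
    (hlim : ∀ x, ∃ N, ∀ n, N ≤ n → (g x n = true ↔ x ∈ H)) :
    ∃ e : ℕ, ∀ x, ∃ S, ∀ s, S ≤ s → (ghat e x s = true ↔ x ∈ H) := by
  have hF : Computable fun n : ℕ => (cond (g n.unpair.1 n.unpair.2) 1 0 : ℕ) :=
    Computable.cond (hg.comp (Computable.fst.comp Primrec.unpair.to_comp)
      (Computable.snd.comp Primrec.unpair.to_comp)) (Computable.const 1) (Computable.const 0)
  have hP : Nat.Partrec fun n => Part.some (cond (g n.unpair.1 n.unpair.2) 1 0 : ℕ) :=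
    Partrec.nat_iff.1 hF
  obtain ⟨cg, hcg⟩ := Nat.Partrec.Code.exists_code.1 hP
  refine ⟨Encodable.encode cg, fun x => ?_⟩
  obtain ⟨N, hN⟩ := hlim x
  have hev : (cond (g x N) 1 0 : ℕ) ∈ Nat.Partrec.Code.eval cg (Nat.pair x N) := by
    rw [hcg]; simp
  obtain ⟨k₀, hk₀⟩ := Nat.Partrec.Code.evaln_complete.1 hev
  refine ⟨max k₀ N, fun s hs => ?_⟩
  have hks : k₀ ≤ s := le_trans (le_max_left _ _) hs
  have hNs : N ≤ s := le_trans (le_max_right _ _) hs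
  have hco : Denumerable.ofNat Nat.Partrec.Code (Encodable.encode cg) = cg :=
    Denumerable.ofNat_encode cg
  set f : ℕ → Option ℕ := fun t =>
    Nat.Partrec.Code.evaln s (Denumerable.ofNat Nat.Partrec.Code (Encodable.encode cg))
      (Nat.pair x t) with hf
  have hfN : f N = some (cond (g x N) 1 0) := by
    rw [hf]; simp only [hco]
    exact Option.mem_def.1 (Nat.Partrec.Code.evaln_mono hks hk₀)
  have hex : ∃ t ≤ s, (f t).isSome := ⟨N, hNs, by simp [hfN]⟩
  obtain ⟨t, hts, h1, h2, h3⟩ := lastSome_spec hex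
  have htN : N ≤ t := by
    by_contra hc
    push_neg at hc
    have := h3 N hNs hc
    rw [hfN] at this
    exact absurd this (by simp)
  obtain ⟨v, hv⟩ := Option.isSome_iff_exists.1 h2
  have hvmem : v ∈ Nat.Partrec.Code.eval cg (Nat.pair x t) := by
    apply Nat.Partrec.Code.evaln_sound (k := s)
    rw [← hco]
    exact Option.mem_def.2 hv
  rw [hcg] at hvmem
  simp only [Part.mem_some_iff, Nat.unpair_pair] at hvmem
  have hghat : ghat (Encodable.encode cg) x s = decide (v = 1) := by
    unfold ghat
    rw [show lastSome f s = some v from by rw [h1, hv]]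
  rw [hghat]
  have hgx := hN t htN
  by_cases hxH : x ∈ H
  · have hgt : g x t = true := hgx.2 hxH
    rw [hgt] at hvmem
    simp [hvmem, hxH]
  · have hgt : g x t = false := by
      cases hgt : g x t
      · rfl
      · exact absurd (hgx.1 hgt) hxH
    rw [hgt] at hvmem
    simp [hvmem, hxH]

/-! ### The coloring has no infinite Δ⁰₂ homogeneous set -/

theorem geo_sum : ∀ n : ℕ, (∑ d ∈ Finset.range n, 2 * 3 ^ d) + 1 = 3 ^ n := by
  intro n
  induction n with
  | zero => rfl
  | succ n ih => rw [Finset.sum_range_succ, pow_succ]; omega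

theorem jc_no_hom (H : Set ℕ)
    (hd : ∃ g : ℕ → ℕ → Bool, Computable₂ g ∧
      ∀ x, ∃ N, ∀ n, N ≤ n → (g x n = true ↔ x ∈ H))
    (hinf : H.Infinite) (h : ℕ)
    (hhom : ∀ x ∈ H, ∀ y ∈ H, x ≠ y → jc x y = h) : False := by
  classical
  obtain ⟨g, hgc, hglim⟩ := hd
  obtain ⟨e, he⟩ := ghat_lim hgc H hglim
  set p : ℕ → Prop := fun x => x ∈ H with hp
  have hpinf : (setOf p).Infinite := by rw [hp]; exact hinf
  set a : ℕ → ℕ := fun i => Nat.nth p i with ha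
  set K := 2 * 3 ^ e with hK
  set m := a (K - 1) with hm
  obtain ⟨S₁, hS₁⟩ := settle_seg he m
  obtain ⟨z, hzH, hz⟩ := hinf.exists_gt (max (max S₁ m) e)
  rw [Nat.max_lt, Nat.max_lt] at hz
  obtain ⟨⟨hz1, hz2⟩, hz3⟩ := hz
  have haH : ∀ i, a i ∈ H := fun i => Nat.nth_mem_of_infinite hpinf i
  have ham : ∀ i, i < K → a i ≤ m := fun i hi =>
    Nat.nth_monotone hpinf (by omega)
  have hgood : ∀ x, x ≤ m → (ghat e x z = true ↔ x ∈ H) :=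
    fun x hx => hS₁ z (le_of_lt hz1) x hx
  have hinA : ∀ x, x ≤ m → inA e x z = decide (x ∈ H) := by
    intro x hx
    have h1 : (decide (x < z)) = true := decide_eq_true (by omega)
    by_cases hxH : x ∈ H
    · have := (hgood x hx).2 hxH
      simp [inA, h1, this, hxH]
    · have h2 : ghat e x z = false := by
        cases hgx : ghat e x z
        · rfl
        · exact absurd ((hgood x hx).1 hgx) hxH
      simp [inA, h1, h2, hxH]
  have hrnk : ∀ i, i < K → rnk e (a i) z = i := by
    intro i hi
    unfold rnk
    have hcongr : ∀ y, y < a i → (fun y => inA e y z) y = (fun y => decide (p y)) y := by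
      intro y hy
      have : y ≤ m := by have := ham i hi; omega
      exact hinA y this
    rw [cntB_congr hcongr, cntB_eq_count p (a i), ha]
    exact Nat.count_nth_of_infinite hpinf i
  have hctrl : ∀ i, i < K → ctrl e (a i) z = true := by
    intro i hi
    have h1 : inA e (a i) z = true := by rw [hinA (a i) (ham i hi)]; simp [haH i]
    have h2 : (decide (rnk e (a i) z < 2 * 3 ^ e)) = true := by
      rw [hrnk i hi]; exact decide_eq_true (by omega)
    simp [ctrl, h1, h2]
  have hest : ∀ i, i < K → ∃ e', est (a i) z = some e' ∧ e' ≤ e := by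
    intro i hi
    exact leastB_le (hctrl i hi) hz3
  -- the set of indices whose pair with z is controlled by a higher-priority requirement
  set B : Finset ℕ := (Finset.range K).filter (fun i => est (a i) z ≠ some e) with hB
  have hBmem : ∀ i ∈ B, ∃ d, est (a i) z = some d ∧ d < e ∧
      inA d (a i) z = true ∧ rnk d (a i) z < 2 * 3 ^ d := by
    intro i hiB
    rw [hB, Finset.mem_filter, Finset.mem_range] at hiB
    obtain ⟨d, hd, hde⟩ := hest i hiB.1
    obtain ⟨hctrl', _, _⟩ := leastB_spec hd
    unfold ctrl at hctrl'
    rw [Bool.and_eq_true, decide_eq_true_eq] at hctrl'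
    exact ⟨d, hd, lt_of_le_of_ne hde (fun hcon => hiB.2 (by rw [hd, hcon])), hctrl'.1, hctrl'.2⟩
  have hBcard : B.card < 3 ^ e := by
    set F : ℕ → ℕ × ℕ := fun i => ((est (a i) z).getD 0, rnk ((est (a i) z).getD 0) (a i) z)
      with hF
    set T : Finset (ℕ × ℕ) := (Finset.range e).biUnion
      (fun d => (Finset.range (2 * 3 ^ d)).image (fun r => (d, r))) with hT
    have hmaps : ∀ i ∈ B, F i ∈ T := by
      intro i hiB
      obtain ⟨d, hd, hde, _, hrd⟩ := hBmem i hiB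
      rw [hF, hT]
      simp only [hd, Option.getD_some]
      exact Finset.mem_biUnion.2 ⟨d, Finset.mem_range.2 hde,
        Finset.mem_image.2 ⟨_, Finset.mem_range.2 hrd, rfl⟩⟩
    have hinj : Set.InjOn F B := by
      intro i hiB j hjB hij
      by_contra hne
      obtain ⟨di, hdi, hdie, hiA, _⟩ := hBmem i hiB
      obtain ⟨dj, hdj, hdje, hjA, _⟩ := hBmem j hjB
      rw [hF] at hij
      simp only [hdi, hdj, Option.getD_some, Prod.mk.injEq] at hij
      obtain ⟨rfl, hrr⟩ := hij
      have hane : a i ≠ a j := fun hcon =>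
        hne (Nat.nth_injective hpinf hcon)
      rcases Nat.lt_or_ge (a i) (a j) with hlt | hge
      · have := cntB_lt_cntB (p := fun y => inA di y z) hlt hiA
        unfold rnk at hrr; omega
      · have hlt : a j < a i := by omega
        have := cntB_lt_cntB (p := fun y => inA di y z) hlt hjA
        unfold rnk at hrr; omega
    have h1 : B.card ≤ T.card := Finset.card_le_card_of_injOn F hmaps hinj
    have h2 : T.card ≤ ∑ d ∈ Finset.range e, 2 * 3 ^ d := by
      refine le_trans Finset.card_biUnion_le (Finset.sum_le_sum fun d _ => ?_)
      exact le_trans Finset.card_image_le (le_of_eq (Finset.card_range _))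
    have h3 := geo_sum e
    omega
  have hgood0 : ∃ i, i < 3 ^ e ∧ est (a i) z = some e := by
    by_contra hcon
    push_neg at hcon
    have hsub : Finset.range (3 ^ e) ⊆ B := by
      intro i hi
      rw [Finset.mem_range] at hi
      exact Finset.mem_filter.2 ⟨Finset.mem_range.2 (by rw [hK]; omega), hcon i hi⟩
    have := Finset.card_le_card hsub
    rw [Finset.card_range] at this
    omega
  have hgood1 : ∃ j, 3 ^ e ≤ j ∧ j < K ∧ est (a j) z = some e := by
    by_contra hcon
    push_neg at hcon
    have hsub : Finset.Ico (3 ^ e) K ⊆ B := by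
      intro j hj
      rw [Finset.mem_Ico] at hj
      exact Finset.mem_filter.2 ⟨Finset.mem_range.2 hj.2, hcon j hj.1 hj.2⟩
    have := Finset.card_le_card hsub
    rw [Nat.card_Ico] at this
    have : K - 3 ^ e = 3 ^ e := by rw [hK]; omega
    omega
  obtain ⟨i, hi3, hesti⟩ := hgood0
  obtain ⟨j, hj3, hjK, hestj⟩ := hgood1
  have hiK : i < K := by rw [hK]; omega
  have hilt : a i < z := by have := ham i hiK; omega
  have hjlt : a j < z := by have := ham j hjK; omega
  have hci : jc (a i) z = 0 := by
    unfold jc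
    rw [decide_eq_true hilt]
    unfold rule
    rw [hesti]
    simp only [cond_true]
    rw [hrnk i hiK, decide_eq_true hi3]
    rfl
  have hcj : jc (a j) z = 1 := by
    unfold jc
    rw [decide_eq_true hjlt]
    unfold rule
    rw [hestj]
    simp only [cond_true]
    rw [hrnk j hjK, decide_eq_false (by omega : ¬ (j < 3 ^ e))]
    rfl
  have h1 := hhom (a i) (haH i) z hzH (by omega)
  have h2 := hhom (a j) (haH j) z hzH (by omega)
  rw [hci] at h1
  rw [hcj] at h2
  omega

/-! ### Part (i): from a Δ⁰₂ branch of an Erdős tree to a Δ⁰₂ homogeneous set -/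

theorem partI (k : ℕ) (c : ℕ → ℕ → ℕ) (hc : Computable₂ c)
    (hsym : ∀ x y, c x y = c y x) (hlt : ∀ x y, c x y < k)
    (T : Set ℕ) (anc : ℕ → ℕ → Prop) (r : Set ℕ)
    (hT : IsErdosTree c T anc) (hB : IsInfBranchN T anc r) (hd : Delta2 r) :
    ∃ H : Set ℕ, Delta2 H ∧ H.Infinite ∧
      ∃ h < k, ∀ x ∈ H, ∀ y ∈ H, x ≠ y → c x y = h := by
  classical
  obtain ⟨hanc1, hanc2, hanc3, hanc4⟩ := hT
  obtain ⟨hrT, hrInf, hrChain, hrDC⟩ := hB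
  have hanclt : ∀ x ∈ r, ∀ y ∈ r, x < y → anc x y := by
    intro x hx y hy hxy
    rcases hrChain x hx y hy with rfl | h | h
    · omega
    · exact h
    · exact absurd (hanc1 _ _ h).2.2 (by omega)
  have hconst : ∀ x ∈ r, ∀ y ∈ r, ∀ z ∈ r, x < y → x < z → c x y = c x z := by
    intro x hx y hy z hz hxy hxz
    rcases lt_trichotomy y z with h | rfl | h
    · exact hanc4 x y z (hanclt x hx y hy hxy) (hanclt y hy z hz h)
    · rfl
    · exact (hanc4 x z y (hanclt x hx z hz hxz) (hanclt z hz y hy h)).symm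
  have hex : ∀ x : ℕ, ∃ y, y ∈ r ∧ x < y := by
    intro x
    obtain ⟨b, hb, hxb⟩ := hrInf.exists_gt x
    exact ⟨b, hb, hxb⟩
  set w : ℕ → ℕ := fun x => Nat.find (hex x) with hw
  have hwr : ∀ x, w x ∈ r := fun x => (Nat.find_spec (hex x)).1
  have hwgt : ∀ x, x < w x := fun x => (Nat.find_spec (hex x)).2
  have hwmin : ∀ x, ∀ y, y < w x → ¬(y ∈ r ∧ x < y) := fun x y hy => Nat.find_min (hex x) hy
  have hpig : ∃ h0, h0 < k ∧ {x | x ∈ r ∧ c x (w x) = h0}.Infinite := by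
    by_contra hcon
    push_neg at hcon
    have hfin : ∀ h0 ∈ Finset.range k, {x | x ∈ r ∧ c x (w x) = h0}.Finite := by
      intro h0 hh0
      rcases Set.finite_or_infinite {x | x ∈ r ∧ c x (w x) = h0} with hf | hf
      · exact hf
      · exact hcon h0 (Finset.mem_range.1 hh0)
    have hsub : r ⊆ ⋃ h0 ∈ Finset.range k, {x | x ∈ r ∧ c x (w x) = h0} := by
      intro x hx
      exact Set.mem_biUnion (Finset.mem_range.2 (hlt x (w x))) ⟨hx, rfl⟩
    exact hrInf (Set.Finite.subset (Set.Finite.biUnion (Finset.range k).finite_toSet hfin) hsub)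
  obtain ⟨h0, hh0, hHinf⟩ := hpig
  refine ⟨{x | x ∈ r ∧ c x (w x) = h0}, ?_, hHinf, h0, hh0, ?_⟩
  swap
  · have hhomaux : ∀ x ∈ {x | x ∈ r ∧ c x (w x) = h0}, ∀ y ∈ {x | x ∈ r ∧ c x (w x) = h0},
        x < y → c x y = h0 := by
      intro x hx y hy hxy
      obtain ⟨hxr, hxc⟩ := hx
      obtain ⟨hyr, _⟩ := hy
      rw [← hxc]
      exact hconst x hxr y hyr (w x) (hwr x) hxy (hwgt x)
    intro x hx y hy hxy
    rcases lt_trichotomy x y with h | rfl | h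
    · exact hhomaux x hx y hy h
    · exact absurd rfl hxy
    · rw [hsym]; exact hhomaux y hy x hx h
  -- the homogeneous set is Δ⁰₂
  obtain ⟨g, hgc, hglim⟩ := hd
  refine ⟨fun x n =>
    g x n && (Option.casesOn (leastB (fun y => decide (x < y) && g y n) n) false
      (fun y => decide (c x y = h0))), ?_, ?_⟩
  · -- computability of the approximation
    have hq : Computable₂ fun (q : ℕ × ℕ) (y : ℕ) => decide (q.1 < y) && g y q.2 := by
      have h1 : Computable fun u : (ℕ × ℕ) × ℕ => decide (u.1.1 < u.2) :=
        Primrec.nat_lt.decide.to_comp.comp (Computable.fst.comp Computable.fst) Computable.snd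
      have h2 : Computable fun u : (ℕ × ℕ) × ℕ => g u.2 u.1.2 :=
        hgc.comp Computable.snd (Computable.snd.comp Computable.fst)
      exact (Primrec.and.to_comp.comp h1 h2).to₂
    have hleast : Computable fun q : ℕ × ℕ =>
        leastB (fun y => decide (q.1 < y) && g y q.2) q.2 :=
      (leastB_computable hq).comp Computable.id Computable.snd
    have hdec : Computable fun n : ℕ => decide (n = h0) :=
      (Primrec.eq.comp Primrec.id (Primrec.const h0)).decide.to_comp
    have hg2 : Computable₂ fun (q : ℕ × ℕ) (y : ℕ) => decide (c q.1 y = h0) :=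
      (hdec.comp (hc.comp (Computable.fst.comp Computable.fst) Computable.snd)).to₂
    have hcase : Computable fun q : ℕ × ℕ =>
        (Option.casesOn (leastB (fun y => decide (q.1 < y) && g y q.2) q.2) false
          (fun y => decide (c q.1 y = h0)) : Bool) :=
      Computable.option_casesOn hleast (Computable.const false) hg2
    exact Computable₂.mk (Primrec.and.to_comp.comp
      (hgc.comp Computable.fst Computable.snd) hcase)
  · -- limit behaviour
    intro x
    obtain ⟨N₀, hN₀⟩ := settle_seg hglim (w x)
    refine ⟨max N₀ (w x + 1), fun n hn => ?_⟩
    have hn0 : N₀ ≤ n := le_trans (le_max_left _ _) hn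
    have hnw : w x < n := by have := le_trans (le_max_right _ _) hn; omega
    have hfind : leastB (fun y => decide (x < y) && g y n) n = some (w x) := by
      apply leastB_eq
      · rw [Bool.and_eq_true]
        exact ⟨decide_eq_true (hwgt x), (hN₀ n hn0 (w x) le_rfl).2 (hwr x)⟩
      · exact hnw
      · intro j hj
        by_cases hxj : x < j
        · have hjr : j ∉ r := fun hjr => hwmin x j hj ⟨hjr, hxj⟩
          have hgj : g j n = false := by
            cases hgj : g j n
            · rfl
            · exact absurd ((hN₀ n hn0 j (by omega)).1 hgj) hjr
          simp [hgj]
        · simp [hxj]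
    simp only [hfind]
    rw [Bool.and_eq_true, decide_eq_true_eq]
    constructor
    · rintro ⟨hgx, hcx⟩
      exact ⟨(hN₀ n hn0 x (by have := hwgt x; omega)).1 hgx, hcx⟩
    · rintro ⟨hxr, hcx⟩
      exact ⟨(hN₀ n hn0 x (by have := hwgt x; omega)).2 hxr, hcx⟩

end BND17

/-- (i) if a recursive coloring c admits an Erdős tree with an
infinite branch r that is Δ⁰₂, then c has an infinite Δ⁰₂ homogeneous set; hence
(ii), by Jockusch's theorem (a recursive 2-coloring of pairs with no infinite Σ⁰₂
homogeneous set), there is a recursive coloring for which no infinite branch of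
any of its Erdős trees is Δ⁰₂. -/
theorem branch_not_delta2 :
    (∀ k : ℕ, 2 ≤ k → ∀ c : ℕ → ℕ → ℕ, Computable₂ c →
      (∀ x y, c x y = c y x) → (∀ x y, c x y < k) →
      ∀ (T : Set ℕ) (anc : ℕ → ℕ → Prop) (r : Set ℕ),
        IsErdosTree c T anc → IsInfBranchN T anc r → Delta2 r →
        ∃ H : Set ℕ, Delta2 H ∧ H.Infinite ∧
          ∃ h < k, ∀ x ∈ H, ∀ y ∈ H, x ≠ y → c x y = h) ∧
    (∃ c : ℕ → ℕ → ℕ, Computable₂ c ∧ (∀ x y, c x y = c y x) ∧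
      (∀ x y, c x y < 2) ∧
      ∀ (T : Set ℕ) (anc : ℕ → ℕ → Prop) (r : Set ℕ),
        IsErdosTree c T anc → IsInfBranchN T anc r → ¬ Delta2 r) := by

  constructor
  · intro k _ c hc hsym hlt T anc r hT hB hd
    exact BND17.partI k c hc hsym hlt T anc r hT hB hd
  · refine ⟨BND17.jc, BND17.jc_computable, BND17.jc_symm, BND17.jc_lt_two, ?_⟩
    intro T anc r hT hB hd
    obtain ⟨H, hd2, hinf, h, _, hhom⟩ :=
      BND17.partI 2 BND17.jc BND17.jc_computable BND17.jc_symm BND17.jc_lt_two T anc r hT hB hd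
    exact BND17.jc_no_hom H hd2 hinf h hhom
end
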